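/- arXiv:2104.04352 — 8 statements merged into one kernel-verified Lean document; each statement's English description precedes it below -/
import Mathlib

section
/- For any bipartite quantum state ρ_{AB} on a finite-dimensional Hilbert space H_A ⊗ H_B, the purities of the marginals satisfy tr[ρ_A²] + tr[ρ_B²] ≤ 1 + tr[ρ_{AB}²], where ρ_A = tr_B ρ_{AB} and ρ_B = tr_A ρ_{AB}. -/
open Matrix ComplexOrder
open Kronecker

section aux

variable {Y : Type*} [Fintype Y] [DecidableEq Y]

/-- Matrix of a function `s` (column convention). -/
noncomputable def permM (s : Y → Y) : Matrix Y Y ℂ :=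
  Matrix.of fun x y => if x = s y then 1 else 0

lemma mul_permM_apply (M : Matrix Y Y ℂ) (s : Y → Y) (x y : Y) :
    (M * permM s) x y = M x (s y) := by
  simp [Matrix.mul_apply, permM, mul_ite]

lemma permM_mul_permM (s t : Y → Y) : permM s * permM t = permM (s ∘ t) := by
  ext x y
  rw [mul_permM_apply]
  rfl

lemma trace_mul_permM (M : Matrix Y Y ℂ) (s : Y → Y) :
    (M * permM s).trace = ∑ x, M x (s x) := by
  simp [Matrix.trace, Matrix.diag, mul_permM_apply]

lemma permM_hermitian {s : Y → Y} (hs : Function.Involutive s) :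
    (permM s).IsHermitian := by
  ext x y
  have h : (y = s x) ↔ (x = s y) := ⟨fun h => by rw [h, hs], fun h => by rw [h, hs]⟩
  simp only [conjTranspose_apply, permM, of_apply]
  simp only [h]
  split <;> simp

lemma one_sub_permM_mul_self {s : Y → Y} (hs : Function.Involutive s) :
    (1 - permM s) * (1 - permM s) = (2 : ℂ) • (1 - permM s) := by
  have h1 : permM s * permM s = (1 : Matrix Y Y ℂ) := by
    rw [permM_mul_permM]
    ext x y
    simp [permM, Matrix.one_apply, hs y]
  rw [sub_mul, mul_sub, mul_sub, one_mul, one_mul, mul_one, h1, two_smul]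
  abel

lemma posSemidef_of_sq {K : Matrix Y Y ℂ} (hherm : K.IsHermitian)
    (hsq : K * K = (4 : ℂ) • K) : K.PosSemidef := by
  have h : K = ((2 : ℂ)⁻¹ • K)ᴴ * ((2 : ℂ)⁻¹ • K) := by
    rw [conjTranspose_smul, hherm.eq, smul_mul_assoc, mul_smul_comm, smul_smul, hsq, smul_smul]
    norm_num
  rw [h]
  exact Matrix.posSemidef_conjTranspose_mul_self _

lemma trace_nonneg' {M : Matrix Y Y ℂ} (hM : M.PosSemidef) : 0 ≤ M.trace := by
  rw [Matrix.trace]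
  refine Finset.sum_nonneg fun i _ => ?_
  have := hM.diag_nonneg (i := i)
  simpa [dotProduct, Matrix.mulVec, Pi.single_apply, Finset.sum_ite_eq] using this

lemma trace_mul_nonneg' {M K : Matrix Y Y ℂ} (hM : M.PosSemidef) (hK : K.PosSemidef) :
    0 ≤ (M * K).trace := by
  obtain ⟨C, rfl⟩ : ∃ C : Matrix Y Y ℂ, K = Cᴴ * C := by
    open scoped MatrixOrder Matrix.Norms.L2Operator in
    exact CStarAlgebra.nonneg_iff_eq_star_mul_self.mp hK.nonneg
  rw [← Matrix.mul_assoc, Matrix.trace_mul_cycle]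
  exact trace_nonneg' (hM.mul_mul_conjTranspose_same C)

lemma kron_conjTranspose {X Z : Type*} (A : Matrix X X ℂ) (B : Matrix Z Z ℂ) :
    (A ⊗ₖ B)ᴴ = Aᴴ ⊗ₖ Bᴴ := by
  ext ⟨i, j⟩ ⟨k, l⟩
  simp [conjTranspose_apply, mul_comm]

lemma kron_posSemidef {X Z : Type*} [Fintype X] [DecidableEq X] [Fintype Z] [DecidableEq Z]
    {A : Matrix X X ℂ} {B : Matrix Z Z ℂ} (hA : A.PosSemidef) (hB : B.PosSemidef) :
    (A ⊗ₖ B).PosSemidef := by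
  obtain ⟨C, rfl⟩ : ∃ C : Matrix X X ℂ, A = Cᴴ * C := by
    open scoped MatrixOrder Matrix.Norms.L2Operator in
    exact CStarAlgebra.nonneg_iff_eq_star_mul_self.mp hA.nonneg
  obtain ⟨D, rfl⟩ : ∃ D : Matrix Z Z ℂ, B = Dᴴ * D := by
    open scoped MatrixOrder Matrix.Norms.L2Operator in
    exact CStarAlgebra.nonneg_iff_eq_star_mul_self.mp hB.nonneg
  rw [Matrix.mul_kronecker_mul, ← kron_conjTranspose]
  exact Matrix.posSemidef_conjTranspose_mul_self _

end aux

/-- Partial trace over the second tensor factor. -/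
noncomputable def ptraceB {m n : Type*} [Fintype n]
    (ρ : Matrix (m × n) (m × n) ℂ) : Matrix m m ℂ :=
  Matrix.of fun i j => ∑ k, ρ (i, k) (j, k)

/-- Partial trace over the first tensor factor. -/
noncomputable def ptraceA {m n : Type*} [Fintype m]
    (ρ : Matrix (m × n) (m × n) ℂ) : Matrix n n ℂ :=
  Matrix.of fun i j => ∑ k, ρ (k, i) (k, j)

/-- For any bipartite quantum state `ρ` on `H_A ⊗ H_B`, the purities of the marginals
satisfy `tr[ρ_A²] + tr[ρ_B²] ≤ 1 + tr[ρ²]`. -/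
theorem purity_marginals_le {dA dB : ℕ}
    (ρ : Matrix (Fin dA × Fin dB) (Fin dA × Fin dB) ℂ)
    (hpos : ρ.PosSemidef) (htr : ρ.trace = 1) :
    (ptraceB ρ * ptraceB ρ).trace + (ptraceA ρ * ptraceA ρ).trace
      ≤ 1 + (ρ * ρ).trace := by
  set sA : (Fin dA × Fin dB) × (Fin dA × Fin dB) → (Fin dA × Fin dB) × (Fin dA × Fin dB) :=
    fun x => ((x.2.1, x.1.2), (x.1.1, x.2.2)) with hsA
  set sB : (Fin dA × Fin dB) × (Fin dA × Fin dB) → (Fin dA × Fin dB) × (Fin dA × Fin dB) :=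
    fun x => ((x.1.1, x.2.2), (x.2.1, x.1.2)) with hsB
  have hsAinv : Function.Involutive sA := fun x => rfl
  have hsBinv : Function.Involutive sB := fun x => rfl
  set M := ρ ⊗ₖ ρ with hM
  set SA := permM sA with hSA
  set SB := permM sB with hSB
  set NA := (1 : Matrix _ _ ℂ) - SA with hNA
  set NB := (1 : Matrix _ _ ℂ) - SB with hNB
  set K := NA * NB with hK
  have hcomm : SA * SB = SB * SA := by
    rw [hSA, hSB, permM_mul_permM, permM_mul_permM]
    rfl
  have hNcomm : NA * NB = NB * NA := by
    simp only [hNA, hNB, sub_mul, mul_sub, one_mul, mul_one, hcomm]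
    abel
  have hNA2 : NA * NA = (2 : ℂ) • NA := one_sub_permM_mul_self hsAinv
  have hNB2 : NB * NB = (2 : ℂ) • NB := one_sub_permM_mul_self hsBinv
  have hKherm : K.IsHermitian := by
    have hA : NA.IsHermitian := Matrix.isHermitian_one.sub (permM_hermitian hsAinv)
    have hB : NB.IsHermitian := Matrix.isHermitian_one.sub (permM_hermitian hsBinv)
    rw [Matrix.IsHermitian, hK, Matrix.conjTranspose_mul, hA.eq, hB.eq, ← hNcomm]
  have hKsq : K * K = (4 : ℂ) • K := by
    have h : K * K = (NA * NA) * (NB * NB) := by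
      rw [hK, Matrix.mul_assoc NA NB (NA * NB), ← Matrix.mul_assoc NB NA NB, ← hNcomm,
        Matrix.mul_assoc NA NB NB, ← Matrix.mul_assoc NA NA (NB * NB)]
    rw [h, hNA2, hNB2, smul_mul_assoc, mul_smul_comm, smul_smul, ← hK]
    norm_num
  have hKpsd : K.PosSemidef := posSemidef_of_sq hKherm hKsq
  have hMpsd : M.PosSemidef := kron_posSemidef hpos hpos
  have h0 : 0 ≤ (M * K).trace := trace_mul_nonneg' hMpsd hKpsd
  have hexp : M * K = M - M * SA - M * SB + M * (SA * SB) := by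
    rw [hK, hNA, hNB]
    noncomm_ring
  have h1 : M.trace = 1 := by
    rw [hM, Matrix.trace_kronecker, htr, one_mul]
  have h2 : (M * SA).trace = (ptraceB ρ * ptraceB ρ).trace := by
    rw [hSA, trace_mul_permM]
    simp only [hM, hsA, kroneckerMap_apply, Matrix.trace, Matrix.diag_apply,
      Matrix.mul_apply, ptraceB, Matrix.of_apply, Fintype.sum_prod_type,
      Finset.sum_mul, Finset.mul_sum]
    refine Finset.sum_congr rfl fun a _ => ?_
    rw [Finset.sum_comm]
    exact Finset.sum_congr rfl fun y _ => Finset.sum_comm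
  have h3 : (M * SB).trace = (ptraceA ρ * ptraceA ρ).trace := by
    rw [hSB, trace_mul_permM]
    simp only [hM, hsB, kroneckerMap_apply, Matrix.trace, Matrix.diag_apply,
      Matrix.mul_apply, ptraceA, Matrix.of_apply, Fintype.sum_prod_type,
      Finset.sum_mul, Finset.mul_sum]
    have key : ∀ (g : Fin dA → Fin dB → Fin dA → Fin dB → ℂ),
        ∑ a, ∑ b, ∑ a', ∑ b', g a b a' b' = ∑ b, ∑ b', ∑ a', ∑ a, g a b a' b' := by
      intro g
      rw [show (∑ a, ∑ b, ∑ a', ∑ b', g a b a' b')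
            = ∑ x : (Fin dA × Fin dB) × Fin dA × Fin dB, g x.1.1 x.1.2 x.2.1 x.2.2 by
          simp [Fintype.sum_prod_type],
        show (∑ b, ∑ b', ∑ a', ∑ a, g a b a' b')
            = ∑ x : (Fin dB × Fin dB) × Fin dA × Fin dA, g x.2.2 x.1.1 x.2.1 x.1.2 by
          simp [Fintype.sum_prod_type]]
      exact Fintype.sum_equiv
        ⟨fun x => ((x.1.2, x.2.2), (x.2.1, x.1.1)),
         fun y => ((y.2.2, y.1.1), (y.2.1, y.1.2)),
         fun x => rfl, fun y => rfl⟩ _ _ (fun x => rfl)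
    exact key fun a b a' b' => ρ (a, b) (a, b') * ρ (a', b') (a', b)
  have h4 : (M * (SA * SB)).trace = (ρ * ρ).trace := by
    rw [hSA, hSB, permM_mul_permM, trace_mul_permM]
    simp only [hM, hsA, hsB, kroneckerMap_apply, Matrix.trace, Matrix.diag_apply,
      Matrix.mul_apply, Fintype.sum_prod_type, Function.comp]
  rw [hexp] at h0
  simp only [Matrix.trace_add, Matrix.trace_sub, h1, h2, h3, h4] at h0
  rw [← sub_nonneg]
  convert h0 using 1
  ring
end

section
/- Let E : M_d(ℂ) → M_{d'}(ℂ) be a quantum channel with unitarity u(E) = (d/(d²−1))·(d·tr[Ẽ(I/d)²] − tr[E(I/d)²]), where Ẽ is a complementary channel of E. If E_{X→A} and E_{X→B} are the two marginal channels of an isometry channel E_{X→AB}(ρ) = VρV† (so each is the complementary channel of the other), then u(E_{X→A}) + u(E_{X→B}) ≤ 1. -/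
open Matrix ComplexOrder
open scoped Kronecker

/-- The image `V (I/d) V†` of the maximally mixed state under the isometry channel. -/
noncomputable def mixedImage {dX dA dB : ℕ}
    (V : Matrix (Fin dA × Fin dB) (Fin dX) ℂ) :
    Matrix (Fin dA × Fin dB) (Fin dA × Fin dB) ℂ :=
  V * (((dX : ℂ))⁻¹ • (1 : Matrix (Fin dX) (Fin dX) ℂ)) * Vᴴ

section Aux

/-- permutation matrix -/
noncomputable def permMat' {n : Type*} [Fintype n] [DecidableEq n] (σ : Equiv.Perm n) :
    Matrix n n ℂ :=
  Matrix.of fun i j => if i = σ j then 1 else 0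

lemma permMat'_mul {n : Type*} [Fintype n] [DecidableEq n] (σ τ : Equiv.Perm n) :
    permMat' σ * permMat' τ = permMat' (τ.trans σ) := by
  ext i j
  simp only [permMat', Matrix.mul_apply, Matrix.of_apply, ite_mul, one_mul, zero_mul,
    mul_ite, mul_one, mul_zero]
  rw [Finset.sum_ite_eq' Finset.univ (τ j) (fun z => if i = σ z then (1:ℂ) else 0)]
  simp [Equiv.trans]
  congr

lemma permMat'_refl {n : Type*} [Fintype n] [DecidableEq n] :
    permMat' (Equiv.refl n) = (1 : Matrix n n ℂ) := by
  ext i j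
  simp [permMat', Matrix.one_apply, eq_comm]
  congr

lemma permMat'_conjTranspose {n : Type*} [Fintype n] [DecidableEq n] (σ : Equiv.Perm n) :
    (permMat' σ)ᴴ = permMat' σ.symm := by
  ext i j
  simp only [permMat', Matrix.conjTranspose_apply, Matrix.of_apply]
  by_cases h : j = σ i
  · simp [h]
  · rw [if_neg h, if_neg (fun hc => h (by rw [hc]; simp))]
    simp

lemma trace_permMat'_mul {n : Type*} [Fintype n] [DecidableEq n] (σ : Equiv.Perm n)
    (K : Matrix n n ℂ) : (permMat' σ * K).trace = ∑ z, K z (σ z) := by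
  simp only [Matrix.trace, Matrix.diag, Matrix.mul_apply, permMat', Matrix.of_apply,
    ite_mul, one_mul, zero_mul]
  rw [Finset.sum_comm]
  refine Finset.sum_congr rfl fun z _ => ?_
  simp [eq_comm (a := σ z)]

variable {A B : Type*} [Fintype A] [Fintype B] [DecidableEq A] [DecidableEq B]

/-- swap of the `A` tensor factors between the two copies -/
def sigA : Equiv.Perm ((A × B) × (A × B)) :=
  Function.Involutive.toPerm
    (fun p => ((p.2.1, p.1.2), (p.1.1, p.2.2))) (fun _ => rfl)

/-- swap of the `B` tensor factors between the two copies -/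
def sigB : Equiv.Perm ((A × B) × (A × B)) :=
  Function.Involutive.toPerm
    (fun p => ((p.1.1, p.2.2), (p.2.1, p.1.2))) (fun _ => rfl)

omit [Fintype A] [Fintype B] [DecidableEq A] [DecidableEq B] in
lemma sigA_apply (p : (A × B) × (A × B)) : sigA p = ((p.2.1, p.1.2), (p.1.1, p.2.2)) := rfl
omit [Fintype A] [Fintype B] [DecidableEq A] [DecidableEq B] in
lemma sigB_apply (p : (A × B) × (A × B)) : sigB p = ((p.1.1, p.2.2), (p.2.1, p.1.2)) := rfl

lemma trace_sigA (N : Matrix (A × B) (A × B) ℂ) :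
    (∑ z : (A × B) × (A × B), (N ⊗ₖ N) z (sigA z)) =
      (ptraceB N * ptraceB N).trace := by
  simp only [Matrix.trace, Matrix.diag, Matrix.mul_apply, ptraceB, Matrix.of_apply,
    sigA_apply, kroneckerMap_apply, Finset.sum_mul_sum, Fintype.sum_prod_type]
  exact Finset.sum_congr rfl fun a1 _ => Finset.sum_comm

lemma trace_sigB (N : Matrix (A × B) (A × B) ℂ) :
    (∑ z : (A × B) × (A × B), (N ⊗ₖ N) z (sigB z)) =
      (ptraceA N * ptraceA N).trace := by
  simp only [Matrix.trace, Matrix.diag, Matrix.mul_apply, ptraceA, Matrix.of_apply,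
    sigB_apply, kroneckerMap_apply, Finset.sum_mul_sum, Fintype.sum_prod_type]
  have key : ∀ f : A → B → A → B → ℂ, (∑ a1, ∑ b1, ∑ a2, ∑ b2, f a1 b1 a2 b2)
      = ∑ b1, ∑ b2, ∑ a1, ∑ a2, f a1 b1 a2 b2 := by
    intro f
    rw [Finset.sum_comm]
    refine Finset.sum_congr rfl fun b1 _ => ?_
    rw [show (∑ a1, ∑ a2, ∑ b2, f a1 b1 a2 b2) = ∑ a1, ∑ b2, ∑ a2, f a1 b1 a2 b2 from
      Finset.sum_congr rfl fun a1 _ => Finset.sum_comm]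
    exact Finset.sum_comm
  exact key _

/-- full swap of the two copies -/
def sigW : Equiv.Perm ((A × B) × (A × B)) :=
  Function.Involutive.toPerm (fun p => (p.2, p.1)) (fun _ => rfl)

omit [Fintype A] [Fintype B] [DecidableEq A] [DecidableEq B] in
lemma sigW_apply (p : (A × B) × (A × B)) : sigW p = (p.2, p.1) := rfl

omit [DecidableEq A] [DecidableEq B] in
lemma trace_sigW (N : Matrix (A × B) (A × B) ℂ) :
    (∑ z : (A × B) × (A × B), (N ⊗ₖ N) z (sigW z)) =
      (N * N).trace := by
  simp only [Matrix.trace, Matrix.diag, Matrix.mul_apply, sigW_apply,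
    kroneckerMap_apply, Fintype.sum_prod_type]

lemma kron_conjT {l m n p : Type*} (X : Matrix l m ℂ) (Y : Matrix n p ℂ) :
    (X ⊗ₖ Y)ᴴ = Xᴴ ⊗ₖ Yᴴ := by
  ext i j
  simp [Matrix.conjTranspose_apply, kroneckerMap_apply, mul_comm]

lemma trace_conjT_mul_self_nonneg {m n : Type*} [Fintype m] [Fintype n]
    (X : Matrix m n ℂ) : 0 ≤ (Xᴴ * X).trace := by
  rw [Matrix.trace]
  refine Finset.sum_nonneg fun j _ => ?_
  rw [Matrix.diag_apply, Matrix.mul_apply]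
  exact Finset.sum_nonneg fun i _ => by
    simpa [Matrix.conjTranspose_apply] using star_mul_self_nonneg (X i j)

lemma trace_mul_mul_conjT_nonneg {m n : Type*} [Fintype m] [Fintype n]
    (E : Matrix m m ℂ) (U : Matrix m n ℂ) : 0 ≤ ((E * Eᴴ) * (U * Uᴴ)).trace := by
  have h : ((E * Eᴴ) * (U * Uᴴ)).trace = ((Uᴴ * E)ᴴ * (Uᴴ * E)).trace := by
    rw [Matrix.conjTranspose_mul, Matrix.conjTranspose_conjTranspose]
    rw [Matrix.mul_assoc E Eᴴ, Matrix.trace_mul_comm E]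
    simp [Matrix.mul_assoc]
  rw [h]
  exact trace_conjT_mul_self_nonneg _

/-- the central positivity statement -/
lemma key_ineq {X : Type*} [Fintype X] (V : Matrix (A × B) X ℂ) :
    0 ≤ ((V * Vᴴ).trace)^2 + ((V * Vᴴ) * (V * Vᴴ)).trace
        - (ptraceB (V * Vᴴ) * ptraceB (V * Vᴴ)).trace
        - (ptraceA (V * Vᴴ) * ptraceA (V * Vᴴ)).trace := by
  classical
  set N : Matrix (A × B) (A × B) ℂ := V * Vᴴ with hN
  set SA : Matrix ((A × B) × (A × B)) ((A × B) × (A × B)) ℂ := permMat' sigA with hSA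
  set SB : Matrix ((A × B) × (A × B)) ((A × B) × (A × B)) ℂ := permMat' sigB with hSB
  set K : Matrix ((A × B) × (A × B)) ((A × B) × (A × B)) ℂ := N ⊗ₖ N with hK
  set W : Matrix ((A × B) × (A × B)) ((A × B) × (A × B)) ℂ := permMat' sigW with hW
  have hSA2 : SA * SA = 1 := by rw [hSA, permMat'_mul]; exact permMat'_refl
  have hSB2 : SB * SB = 1 := by rw [hSB, permMat'_mul]; exact permMat'_refl
  have hW2 : W * W = 1 := by rw [hW, permMat'_mul]; exact permMat'_refl
  have hAB : SA * SB = W := by rw [hSA, hSB, hW, permMat'_mul]; rfl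
  have hBA : SB * SA = W := by rw [hSA, hSB, hW, permMat'_mul]; rfl
  have hAW : SA * W = SB := by rw [hSA, hW, hSB, permMat'_mul]; rfl
  have hWA : W * SA = SB := by rw [hSA, hW, hSB, permMat'_mul]; rfl
  have hBW : SB * W = SA := by rw [hSB, hW, hSA, permMat'_mul]; rfl
  have hWB : W * SB = SA := by rw [hSB, hW, hSA, permMat'_mul]; rfl
  have hSAH : SAᴴ = SA := by rw [hSA, permMat'_conjTranspose]; rfl
  have hSBH : SBᴴ = SB := by rw [hSB, permMat'_conjTranspose]; rfl
  have hWH : Wᴴ = W := by rw [hW, permMat'_conjTranspose]; rfl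
  -- positivity of the trace
  set C : Matrix ((A × B) × (A × B)) ((A × B) × (A × B)) ℂ := 1 - SA - SB + W with hC
  have hCH : Cᴴ = C := by
    rw [hC]
    simp [Matrix.conjTranspose_add, Matrix.conjTranspose_sub, hSAH, hSBH, hWH]
  have hCC : C * Cᴴ = C + C + (C + C) := by
    rw [hCH, hC]
    simp only [sub_mul, mul_sub, add_mul, mul_add, one_mul, mul_one,
      hSA2, hSB2, hW2, hAB, hBA, hAW, hWA, hBW, hWB]
    abel
  have hKUU : K = (V ⊗ₖ V) * (V ⊗ₖ V)ᴴ := by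
    rw [hK, hN, kron_conjT, Matrix.mul_kronecker_mul]
  have hpos : 0 ≤ (C * K).trace := by
    have h4 : 0 ≤ ((C * Cᴴ) * K).trace := by
      rw [hKUU]
      exact trace_mul_mul_conjT_nonneg C (V ⊗ₖ V)
    rw [hCC, add_mul, add_mul, Matrix.trace_add, Matrix.trace_add] at h4
    rw [Complex.nonneg_iff] at h4 ⊢
    obtain ⟨h4r, h4i⟩ := h4
    simp only [Complex.add_re, Complex.add_im] at h4r h4i
    constructor
    · linarith
    · linarith
  -- expand the trace
  have hexp : (C * K).trace = K.trace - (SA * K).trace - (SB * K).trace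
      + (W * K).trace := by
    rw [hC]
    have : (1 - SA - SB + W) * K = K - SA * K - SB * K + W * K := by
      noncomm_ring
    rw [this]
    simp [Matrix.trace_add, Matrix.trace_sub]
  have e1 : K.trace = (N.trace)^2 := by
    rw [hK, Matrix.trace_kronecker]; ring
  have e2 : (SA * K).trace = (ptraceB N * ptraceB N).trace := by
    rw [hSA, hK, trace_permMat'_mul, trace_sigA]
  have e3 : (SB * K).trace = (ptraceA N * ptraceA N).trace := by
    rw [hSB, hK, trace_permMat'_mul, trace_sigB]
  have e4 : (W * K).trace = (N * N).trace := by
    rw [hW, hK, trace_permMat'_mul, trace_sigW]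
  rw [hexp, e1, e2, e3, e4] at hpos
  calc (0:ℂ) ≤ N.trace ^ 2 - (ptraceB N * ptraceB N).trace - (ptraceA N * ptraceA N).trace
      + (N * N).trace := hpos
    _ = N.trace ^ 2 + (N * N).trace - (ptraceB N * ptraceB N).trace
        - (ptraceA N * ptraceA N).trace := by ring

end Aux

/-- Unitarity-based information-disturbance relation: for the marginal channels
`E_{X→A}(ρ) = tr_B[VρV†]` and `E_{X→B}(ρ) = tr_A[VρV†]` of an isometry channel
(each the complementary channel of the other), expressing the unitarity as
`u(E) = (d/(d²−1))·(d·tr[Ẽ(I/d)²] − tr[E(I/d)²])` in terms of the complementary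
channel `Ẽ`, one has `u(E_{X→A}) + u(E_{X→B}) ≤ 1`. -/
theorem unitarity_information_disturbance {dX dA dB : ℕ} (hdX : 0 < dX)
    (V : Matrix (Fin dA × Fin dB) (Fin dX) ℂ) (hV : Vᴴ * V = 1) :
    ((dX : ℂ) / ((dX : ℂ) ^ 2 - 1)) *
        ((dX : ℂ) * (ptraceA (mixedImage V) * ptraceA (mixedImage V)).trace
          - (ptraceB (mixedImage V) * ptraceB (mixedImage V)).trace)
      + ((dX : ℂ) / ((dX : ℂ) ^ 2 - 1)) *
        ((dX : ℂ) * (ptraceB (mixedImage V) * ptraceB (mixedImage V)).trace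
          - (ptraceA (mixedImage V) * ptraceA (mixedImage V)).trace)
      ≤ 1 := by
  classical
  set N : Matrix (Fin dA × Fin dB) (Fin dA × Fin dB) ℂ := V * Vᴴ with hN
  set d : ℂ := (dX : ℂ) with hd
  have hdne : d ≠ 0 := by
    rw [hd]
    exact_mod_cast Nat.cast_ne_zero.mpr hdX.ne'
  -- mixedImage V = d⁻¹ • N
  have hM : mixedImage V = d⁻¹ • N := by
    rw [mixedImage, hN, hd, Matrix.mul_smul, Matrix.mul_one, Matrix.smul_mul]
  have hptB : ptraceB (mixedImage V) = d⁻¹ • ptraceB N := by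
    rw [hM]
    ext i j
    simp [ptraceB, Finset.mul_sum]
  have hptA : ptraceA (mixedImage V) = d⁻¹ • ptraceA N := by
    rw [hM]
    ext i j
    simp [ptraceA, Finset.mul_sum]
  set a : ℂ := (ptraceA N * ptraceA N).trace with ha
  set b : ℂ := (ptraceB N * ptraceB N).trace with hb
  have hA2 : (ptraceA (mixedImage V) * ptraceA (mixedImage V)).trace = d⁻¹ * d⁻¹ * a := by
    rw [hptA, Matrix.smul_mul, Matrix.mul_smul, smul_smul, Matrix.trace_smul, ha,
      smul_eq_mul]
  have hB2 : (ptraceB (mixedImage V) * ptraceB (mixedImage V)).trace = d⁻¹ * d⁻¹ * b := by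
    rw [hptB, Matrix.smul_mul, Matrix.mul_smul, smul_smul, Matrix.trace_smul, hb,
      smul_eq_mul]
  -- trace facts about N
  have hNtr : N.trace = d := by
    rw [hN, Matrix.trace_mul_comm, hV, hd]
    simp [Matrix.trace_one]
  have hNN : N * N = N := by
    rw [hN, Matrix.mul_assoc, ← Matrix.mul_assoc Vᴴ V Vᴴ, hV, Matrix.one_mul]
  -- the key inequality
  have hkey := key_ineq (A := Fin dA) (B := Fin dB) V
  rw [← hN, hNtr, hNN, hNtr, ← hb, ← ha] at hkey
  have hab : a + b ≤ d ^ 2 + d := by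
    refine sub_nonneg.mp ?_
    rw [show d ^ 2 + d - (a + b) = d ^ 2 + d - b - a by ring]
    exact hkey
  rw [hA2, hB2]
  rcases eq_or_lt_of_le (Nat.one_le_iff_ne_zero.mpr hdX.ne' : 1 ≤ dX) with h1 | h2
  · -- dX = 1 : the prefactor vanishes
    rw [hd, ← h1]
    norm_num
  · -- dX ≥ 2
    have hdX2 : 2 ≤ dX := h2
    have h1ne : d - 1 ≠ 0 := by
      rw [hd, sub_ne_zero]
      intro hc
      have : dX = 1 := by exact_mod_cast hc
      omega
    have h2ne : d + 1 ≠ 0 := by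
      rw [hd, show ((dX : ℂ) + 1) = ((dX + 1 : ℕ) : ℂ) by push_cast; ring]
      exact Nat.cast_ne_zero.mpr (by omega)
    have hsqne : d ^ 2 - 1 ≠ 0 := by
      rw [show d ^ 2 - 1 = (d - 1) * (d + 1) by ring]
      exact mul_ne_zero h1ne h2ne
    set γ : ℂ := d / (d ^ 2 - 1) * (d⁻¹ * d⁻¹) * (d - 1) with hγdef
    have hγr : γ = (((dX : ℝ) / ((dX : ℝ) ^ 2 - 1) * ((dX : ℝ)⁻¹ * (dX : ℝ)⁻¹)
        * ((dX : ℝ) - 1) : ℝ) : ℂ) := by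
      rw [hγdef, hd]
      push_cast
      ring
    have hγ : 0 ≤ γ := by
      rw [hγr, Complex.zero_le_real]
      have hd2 : (2 : ℝ) ≤ (dX : ℝ) := by exact_mod_cast hdX2
      have hpos : (0 : ℝ) < (dX : ℝ) ^ 2 - 1 := by nlinarith
      have : (0 : ℝ) ≤ (dX : ℝ) / ((dX : ℝ) ^ 2 - 1) :=
        div_nonneg (by linarith) hpos.le
      have h0 : (0 : ℝ) ≤ (dX : ℝ)⁻¹ * (dX : ℝ)⁻¹ := by positivity
      have h1 : (0 : ℝ) ≤ (dX : ℝ) - 1 := by linarith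
      exact mul_nonneg (mul_nonneg this h0) h1
    calc d / (d ^ 2 - 1) * (d * (d⁻¹ * d⁻¹ * a) - d⁻¹ * d⁻¹ * b)
          + d / (d ^ 2 - 1) * (d * (d⁻¹ * d⁻¹ * b) - d⁻¹ * d⁻¹ * a)
        = γ * (a + b) := by rw [hγdef]; ring
      _ ≤ γ * (d ^ 2 + d) := mul_le_mul_of_nonneg_left hab hγ
      _ = 1 := by
          rw [hγdef]
          field_simp
          ring
end

section
/- For a bipartite channel E_{AB}, the sub-unitarity u_{A→A}(E_{AB}) equals the unitarity u(E_A) of the induced local channel E_A(ρ) := tr_B[E_{AB}(ρ ⊗ I_B/d_B)]. -/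
open Matrix Kronecker ComplexOrder

/-- The Choi matrix of a linear map on matrices; the map is completely positive
iff this matrix is positive semidefinite. -/
noncomputable def choi {ι κ : Type*} [Fintype ι] [DecidableEq ι]
    (E : Matrix ι ι ℂ →ₗ[ℂ] Matrix κ κ ℂ) : Matrix (κ × ι) (κ × ι) ℂ :=
  Matrix.of fun p q => E (Matrix.single p.2 q.2 1) p.1 q.1

lemma trace_kron_one_mul {m n : Type*} [Fintype m] [Fintype n] [DecidableEq n]
    (M : Matrix m m ℂ) (ρ : Matrix (m × n) (m × n) ℂ) :
    ((M ⊗ₖ (1 : Matrix n n ℂ)) * ρ).trace = (M * ptraceB ρ).trace := by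
  simp only [Matrix.trace, Matrix.diag, Matrix.mul_apply, ptraceB, Matrix.of_apply,
    Matrix.kroneckerMap_apply, Matrix.one_apply, Fintype.sum_prod_type, mul_ite, mul_one,
    mul_zero, ite_mul, zero_mul, Finset.mul_sum, Finset.sum_ite_eq, Finset.mem_univ, if_true]
  refine Finset.sum_congr rfl fun i _ => ?_
  exact Finset.sum_comm

lemma ptraceB_smul {m n : Type*} [Fintype n] (c : ℂ) (ρ : Matrix (m × n) (m × n) ℂ) :
    ptraceB (c • ρ) = c • ptraceB ρ := by
  ext i j
  simp [ptraceB, Finset.mul_sum]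

/-- For a bipartite channel `E` the sub-unitarity `u_{A→A}(E)` equals the unitarity of
the induced local channel `E_A(ρ) = tr_B[E(ρ ⊗ I_B/d_B)]`. -/
theorem subunitarity_eq_local_unitarity {dA dB : ℕ} (hdA : 0 < dA) (hdB : 0 < dB)
    (E : Matrix (Fin dA × Fin dB) (Fin dA × Fin dB) ℂ →ₗ[ℂ]
         Matrix (Fin dA × Fin dB) (Fin dA × Fin dB) ℂ)
    (hCP : (choi E).PosSemidef) (hTP : ∀ ρ, (E ρ).trace = ρ.trace)
    (X : Fin (dA ^ 2 - 1) → Matrix (Fin dA) (Fin dA) ℂ)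
    (hXtr : ∀ i, (X i).trace = 0)
    (hXortho : ∀ i j, ((X i)ᴴ * X j).trace = if i = j then 1 else 0) :
    (1 / ((dA : ℝ) ^ 2 - 1)) * ∑ i, ∑ j,
        ‖((X i ⊗ₖ ((Real.sqrt dB : ℂ)⁻¹ • (1 : Matrix (Fin dB) (Fin dB) ℂ)))ᴴ *
            E (X j ⊗ₖ ((Real.sqrt dB : ℂ)⁻¹ • 1))).trace‖ ^ 2
      = (1 / ((dA : ℝ) ^ 2 - 1)) * ∑ i, ∑ j,
        ‖((X i)ᴴ *
            ptraceB (E (X j ⊗ₖ (((dB : ℂ))⁻¹ • (1 : Matrix (Fin dB) (Fin dB) ℂ))))).trace‖ ^ 2 := by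
  congr 1
  refine Finset.sum_congr rfl fun i _ => ?_
  refine Finset.sum_congr rfl fun j _ => ?_
  have hc : ((Real.sqrt dB : ℂ))⁻¹ * ((Real.sqrt dB : ℂ))⁻¹ = ((dB : ℂ))⁻¹ := by
    rw [← mul_inv, ← Complex.ofReal_mul, Real.mul_self_sqrt (Nat.cast_nonneg dB)]
    norm_num
  congr 1
  have h1 : ∀ (M : Matrix (Fin dA) (Fin dA) ℂ) (c : ℂ),
      M ⊗ₖ (c • (1 : Matrix (Fin dB) (Fin dB) ℂ)) = c • (M ⊗ₖ (1 : Matrix (Fin dB) (Fin dB) ℂ)) := by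
    intro M c
    ext ⟨a,b⟩ ⟨a',b'⟩
    simp [Matrix.kroneckerMap_apply, Matrix.one_apply, mul_comm]
  rw [h1, h1, h1, _root_.map_smul, _root_.map_smul, Matrix.conjTranspose_smul, Matrix.smul_mul,
    Matrix.mul_smul, Matrix.trace_smul, Matrix.trace_smul, ptraceB_smul,
    Matrix.mul_smul, Matrix.trace_smul]
  have h2 : (X i ⊗ₖ (1 : Matrix (Fin dB) (Fin dB) ℂ))ᴴ
      = (X i)ᴴ ⊗ₖ (1 : Matrix (Fin dB) (Fin dB) ℂ) := by
    ext ⟨a,b⟩ ⟨a',b'⟩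
    simp [Matrix.conjTranspose_apply, Matrix.kroneckerMap_apply, Matrix.one_apply]
    rcases eq_or_ne b b' with h | h
    · subst h; simp
    · simp [h, h.symm]
  rw [h2, trace_kron_one_mul]
  rw [smul_smul, smul_eq_mul, smul_eq_mul]
  congr 1
  rw [← hc]
  simp [Complex.conj_ofReal]
end

section
/- Let E = Σ_i p_i E_{A,i} ⊗ E_{B,i} be a separable bipartite channel. Then tr[(X_0 ⊗ Y_k)† E(X_j ⊗ Y_0)] = 0 for all j ≥ 1, k ≥ 1, so the block T_{A→B} vanishes and u_{A→B}(E) = 0. -/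
open Matrix Kronecker ComplexOrder

lemma kronecker_conjTranspose' {m n : Type*} (A : Matrix m m ℂ) (B : Matrix n n ℂ) :
    (A ⊗ₖ B)ᴴ = Aᴴ ⊗ₖ Bᴴ := by
  ext p q
  simp [conjTranspose_apply, kroneckerMap_apply]

/-- For a separable bipartite channel `E = Σ_i p_i E_{A,i} ⊗ E_{B,i}`, the Liouville
block `T_{A→B}` vanishes entrywise, and hence the sub-unitarity `u_{A→B}(E) = 0`. -/
theorem separable_uAtoB_zero {dA dB r : ℕ} (hdA : 0 < dA) (hdB : 0 < dB)
    (p : Fin r → ℝ) (hp0 : ∀ i, 0 ≤ p i) (hp1 : ∑ i, p i = 1)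
    (EA : Fin r → (Matrix (Fin dA) (Fin dA) ℂ →ₗ[ℂ] Matrix (Fin dA) (Fin dA) ℂ))
    (hEAcp : ∀ i, (choi (EA i)).PosSemidef) (hEAtp : ∀ i ρ, (EA i ρ).trace = ρ.trace)
    (EB : Fin r → (Matrix (Fin dB) (Fin dB) ℂ →ₗ[ℂ] Matrix (Fin dB) (Fin dB) ℂ))
    (hEBcp : ∀ i, (choi (EB i)).PosSemidef) (hEBtp : ∀ i ρ, (EB i ρ).trace = ρ.trace)
    (E : Matrix (Fin dA × Fin dB) (Fin dA × Fin dB) ℂ →ₗ[ℂ]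
         Matrix (Fin dA × Fin dB) (Fin dA × Fin dB) ℂ)
    (hsep : ∀ (MA : Matrix (Fin dA) (Fin dA) ℂ) (MB : Matrix (Fin dB) (Fin dB) ℂ),
        E (MA ⊗ₖ MB) = ∑ i, (p i : ℂ) • ((EA i MA) ⊗ₖ (EB i MB)))
    (X : Fin (dA ^ 2 - 1) → Matrix (Fin dA) (Fin dA) ℂ)
    (hXtr : ∀ i, (X i).trace = 0)
    (hXortho : ∀ i j, ((X i)ᴴ * X j).trace = if i = j then 1 else 0)
    (Y : Fin (dB ^ 2 - 1) → Matrix (Fin dB) (Fin dB) ℂ)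
    (hYtr : ∀ i, (Y i).trace = 0)
    (hYortho : ∀ i j, ((Y i)ᴴ * Y j).trace = if i = j then 1 else 0) :
    (∀ k j, ((((Real.sqrt dA : ℂ)⁻¹ • (1 : Matrix (Fin dA) (Fin dA) ℂ)) ⊗ₖ Y k)ᴴ *
        E (X j ⊗ₖ ((Real.sqrt dB : ℂ)⁻¹ • (1 : Matrix (Fin dB) (Fin dB) ℂ)))).trace = 0)
    ∧
    (1 / ((dA : ℝ) ^ 2 - 1)) * ∑ k, ∑ j,
        ‖((((Real.sqrt dA : ℂ)⁻¹ • (1 : Matrix (Fin dA) (Fin dA) ℂ)) ⊗ₖ Y k)ᴴ *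
            E (X j ⊗ₖ ((Real.sqrt dB : ℂ)⁻¹ • (1 : Matrix (Fin dB) (Fin dB) ℂ)))).trace‖ ^ 2
      = 0 := by
  have key : ∀ k j, ((((Real.sqrt dA : ℂ)⁻¹ • (1 : Matrix (Fin dA) (Fin dA) ℂ)) ⊗ₖ Y k)ᴴ *
        E (X j ⊗ₖ ((Real.sqrt dB : ℂ)⁻¹ • (1 : Matrix (Fin dB) (Fin dB) ℂ)))).trace = 0 := by
    intro k j
    rw [hsep, Finset.mul_sum, trace_sum]
    refine Finset.sum_eq_zero fun i _ => ?_
    rw [kronecker_conjTranspose', Matrix.mul_smul, ← mul_kronecker_mul, trace_smul,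
      trace_kronecker]
    have hA : ((((Real.sqrt dA : ℂ)⁻¹ • (1 : Matrix (Fin dA) (Fin dA) ℂ))ᴴ) *
        EA i (X j)).trace = 0 := by
      rw [conjTranspose_smul, conjTranspose_one, Matrix.smul_mul, one_mul, trace_smul,
        hEAtp, hXtr, smul_zero]
    rw [hA, zero_mul, smul_zero]
  refine ⟨key, ?_⟩
  have : ∀ k : Fin (dB ^ 2 - 1), ∀ j : Fin (dA ^ 2 - 1),
      ‖((((Real.sqrt dA : ℂ)⁻¹ • (1 : Matrix (Fin dA) (Fin dA) ℂ)) ⊗ₖ Y k)ᴴ *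
        E (X j ⊗ₖ ((Real.sqrt dB : ℂ)⁻¹ • (1 : Matrix (Fin dB) (Fin dB) ℂ)))).trace‖ ^ 2 = 0 := by
    intro k j; rw [key k j]; simp
  rw [Finset.sum_congr rfl fun k _ => Finset.sum_congr rfl fun j _ => this k j]
  simp
end

section
/- Let E₁, E₂ be quantum channels on M_d(ℂ) with unital Liouville blocks T₁, T₂ (entries tr[X_i† E_k(X_j)], i,j ≥ 1, in a Hermitian-compatible orthonormal basis with X_0 = I/√d). Then −d ≤ ⟨T₁, T₂⟩ := tr[T₁†T₂] ≤ d² − 1. -/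
open Matrix ComplexOrder

-- trace of PSD is nonneg
lemma psd_trace_nonneg {n : Type*} [Fintype n] {A : Matrix n n ℂ} (hA : A.PosSemidef) :
    0 ≤ A.trace := by
  classical
  rw [Matrix.trace]
  refine Finset.sum_nonneg fun i _ => ?_
  have := hA.dotProduct_mulVec_nonneg (Pi.single i 1)
  simpa [dotProduct, Matrix.mulVec, Pi.single_apply, Finset.sum_ite_eq,
    Matrix.diag] using this

lemma psd_trace_mul_nonneg {n : Type*} [Fintype n] [DecidableEq n] {A B : Matrix n n ℂ}
    (hA : A.PosSemidef) (hB : B.PosSemidef) : 0 ≤ (A * B).trace := by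
  obtain ⟨C, rfl⟩ : ∃ C : Matrix n n ℂ, B = Cᴴ * C := by
    open MatrixOrder in exact CStarAlgebra.nonneg_iff_eq_star_mul_self.mp hB.nonneg
  have h1 : A * (Cᴴ * C) = (A * Cᴴ) * C := by rw [mul_assoc]
  rw [h1, Matrix.trace_mul_comm, ← mul_assoc]
  exact psd_trace_nonneg (hA.mul_mul_conjTranspose_same C)

lemma psd_trace_sq_le {n : Type*} [Fintype n] [DecidableEq n] {A : Matrix n n ℂ}
    (hA : A.PosSemidef) : (A * A).trace.re ≤ A.trace.re ^ 2 ∧ (A*A).trace.im = 0 ∧ A.trace.im = 0 := by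
  have h := hA.1
  set U : Matrix n n ℂ := (Matrix.IsHermitian.eigenvectorUnitary h : Matrix n n ℂ) with hU
  set f := h.eigenvalues with hf
  have hsUU : star U * U = 1 :=
    Matrix.mem_unitaryGroup_iff'.mp (Matrix.IsHermitian.eigenvectorUnitary h).2
  have hsp : A = U * Matrix.diagonal (RCLike.ofReal ∘ f) * star U := by
    have := h.spectral_theorem; rwa [Unitary.conjStarAlgAut_apply] at this
  set D : Matrix n n ℂ := Matrix.diagonal (RCLike.ofReal ∘ f) with hD
  have h1 : A.trace = ∑ i, (f i : ℂ) := by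
    conv_lhs => rw [hsp]
    rw [Matrix.trace_mul_cycle, hsUU, one_mul, Matrix.trace_diagonal]
    rfl
  have h2 : (A * A).trace = ∑ i, (f i : ℂ) ^ 2 := by
    have key : (U * D * star U) * (U * D * star U) = U * (D * D) * star U := by
      calc (U * D * star U) * (U * D * star U) = U * D * ((star U * U) * (D * star U)) := by
            simp only [mul_assoc]
        _ = U * (D * D) * star U := by rw [hsUU, one_mul]; simp only [mul_assoc]
    conv_lhs => rw [hsp]
    rw [key, Matrix.trace_mul_cycle, hsUU, one_mul, hD,
      Matrix.diagonal_mul_diagonal, Matrix.trace_diagonal]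
    simp [sq]
  have hnn : ∀ i, 0 ≤ f i := hA.eigenvalues_nonneg
  have h1' : A.trace = ((∑ i, f i : ℝ) : ℂ) := by rw [h1]; norm_cast
  have h2' : (A * A).trace = ((∑ i, (f i) ^ 2 : ℝ) : ℂ) := by rw [h2]; norm_cast
  refine ⟨?_, by rw [h2']; exact Complex.ofReal_im _, by rw [h1']; exact Complex.ofReal_im _⟩
  rw [h1', h2', Complex.ofReal_re, Complex.ofReal_re]
  calc ∑ i, f i ^ 2 ≤ ∑ i, f i * (∑ j, f j) := by
        refine Finset.sum_le_sum fun i _ => ?_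
        rw [sq]
        exact mul_le_mul_of_nonneg_left
          (Finset.single_le_sum (fun j _ => hnn j) (Finset.mem_univ i)) (hnn i)
    _ = (∑ i, f i) ^ 2 := by rw [← Finset.sum_mul, sq]

noncomputable def toE {d : ℕ} (A : Matrix (Fin d) (Fin d) ℂ) :
    EuclideanSpace ℂ (Fin d × Fin d) :=
  (WithLp.equiv 2 _).symm (fun p => A p.1 p.2)

lemma inner_toE {d : ℕ} (A B : Matrix (Fin d) (Fin d) ℂ) :
    (inner ℂ (toE A) (toE B) : ℂ) = (Aᴴ * B).trace := by
  simp only [toE, PiLp.inner_apply, WithLp.equiv_symm_apply, PiLp.toLp_apply, RCLike.inner_apply',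
    Matrix.trace, Matrix.diag, Matrix.mul_apply, Matrix.conjTranspose_apply]
  rw [Fintype.sum_prod_type]
  exact Finset.sum_comm

lemma trace_stdBasisMatrix_diag {d : ℕ} (i : Fin d) :
    (Matrix.single i i (1:ℂ)).trace = 1 := by
  simp [Matrix.trace, Matrix.diag, Matrix.single, Matrix.of_apply]

lemma choi_trace {d : ℕ} (E : Matrix (Fin d) (Fin d) ℂ →ₗ[ℂ] Matrix (Fin d) (Fin d) ℂ)
    (hEtp : ∀ ρ, (E ρ).trace = ρ.trace) : (choi E).trace = (d : ℂ) := by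
  have : (choi E).trace = ∑ i : Fin d, (E (Matrix.single i i 1)).trace := by
    rw [Matrix.trace, Fintype.sum_prod_type]
    rw [Finset.sum_comm]
    refine Finset.sum_congr rfl fun i _ => ?_
    rfl
  rw [this]
  simp [hEtp, trace_stdBasisMatrix_diag]


lemma one_eq_sum_std {d : ℕ} : (1 : Matrix (Fin d) (Fin d) ℂ)
    = ∑ i : Fin d, Matrix.single i i 1 := by
  ext a b
  rw [Matrix.sum_apply]
  simp only [Matrix.single, Matrix.of_apply, Matrix.one_apply]
  rcases eq_or_ne a b with rfl | hab
  · simp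
  · rw [if_neg hab, Finset.sum_eq_zero]
    intro i _
    rw [if_neg]
    rintro ⟨rfl, rfl⟩
    exact hab rfl

lemma choi_entry {d : ℕ} (E : Matrix (Fin d) (Fin d) ℂ →ₗ[ℂ] Matrix (Fin d) (Fin d) ℂ)
    (i j p q : Fin d) : choi E (p, i) (q, j) = E (Matrix.single i j 1) p q := rfl

lemma E_one_posSemidef {d : ℕ} (E : Matrix (Fin d) (Fin d) ℂ →ₗ[ℂ] Matrix (Fin d) (Fin d) ℂ)
    (h : (choi E).PosSemidef) : (E 1).PosSemidef := by
  have hent : ∀ i j p q : Fin d,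
      (starRingEnd ℂ) (E (Matrix.single j i 1) q p) = E (Matrix.single i j 1) p q := by
    intro i j p q
    have := congrFun (congrFun h.1 (p, i)) (q, j)
    simpa [Matrix.conjTranspose_apply, choi_entry] using this
  refine Matrix.posSemidef_iff_dotProduct_mulVec.mpr ⟨?_, ?_⟩
  · ext p q
    rw [Matrix.conjTranspose_apply, one_eq_sum_std, map_sum]
    simp only [Matrix.sum_apply, star_sum]
    exact Finset.sum_congr rfl fun i _ => hent i i p q
  · intro v
    rw [one_eq_sum_std, map_sum]
    have key : ∀ i : Fin d, dotProduct (star v) ((E (Matrix.single i i 1)) *ᵥ v)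
        = dotProduct (star (fun pk : Fin d × Fin d => if pk.2 = i then v pk.1 else 0))
            ((choi E) *ᵥ (fun pk : Fin d × Fin d => if pk.2 = i then v pk.1 else 0)) := by
      intro i
      simp only [dotProduct, Matrix.mulVec, Pi.star_apply, Fintype.sum_prod_type,
        apply_ite (star : ℂ → ℂ), star_zero, ite_mul, zero_mul, mul_ite, mul_zero,
        Finset.sum_ite_irrel, Finset.sum_const_zero, Finset.sum_ite_eq', Finset.mem_univ, if_true,
        Finset.mul_sum, choi_entry]
    have hmv : (∑ i, E (Matrix.single i i 1)) *ᵥ v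
        = ∑ i, (E (Matrix.single i i 1)) *ᵥ v := by
      ext p
      simp only [Matrix.mulVec, dotProduct, Matrix.sum_apply, Finset.sum_mul,
        Finset.sum_apply]
      exact Finset.sum_comm
    rw [hmv]
    rw [show dotProduct (star v) (∑ i, (E (Matrix.single i i 1)) *ᵥ v)
        = ∑ i, dotProduct (star v) ((E (Matrix.single i i 1)) *ᵥ v) by
      simp only [dotProduct, Finset.sum_apply, Finset.mul_sum]
      exact Finset.sum_comm]
    refine Finset.sum_nonneg fun i _ => ?_
    rw [key i]
    exact h.dotProduct_mulVec_nonneg _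

lemma trace_conjTranspose_mul {d : ℕ} (A B : Matrix (Fin d) (Fin d) ℂ) :
    (Aᴴ * B).trace = (starRingEnd ℂ) ((Bᴴ * A).trace) := by
  rw [show Aᴴ * B = (Bᴴ * A)ᴴ by rw [Matrix.conjTranspose_mul, Matrix.conjTranspose_conjTranspose],
    Matrix.trace_conjTranspose]
  rfl

lemma trace_conjTranspose_mul_std {d : ℕ} (M : Matrix (Fin d) (Fin d) ℂ) (p q : Fin d) :
    (Mᴴ * Matrix.single p q 1).trace = (starRingEnd ℂ) (M p q) := by
  simp [Matrix.trace, Matrix.diag, Matrix.mul_apply, Matrix.conjTranspose_apply,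
    Matrix.single, Matrix.of_apply, ite_and, mul_ite, mul_one, mul_zero,
    Finset.sum_ite_eq, Finset.sum_ite_eq']

lemma sum4_perm {α : Type*} [AddCommMonoid α] {d : ℕ}
    (F : Fin d → Fin d → Fin d → Fin d → α) :
    ∑ q, ∑ j, ∑ p, ∑ i, F i j p q = ∑ i, ∑ j, ∑ q, ∑ p, F i j p q := by
  calc ∑ q, ∑ j, ∑ p, ∑ i, F i j p q
      = ∑ j, ∑ q, ∑ p, ∑ i, F i j p q := Finset.sum_comm
    _ = ∑ j, ∑ q, ∑ i, ∑ p, F i j p q :=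
        Finset.sum_congr rfl fun _ _ => Finset.sum_congr rfl fun _ _ => Finset.sum_comm
    _ = ∑ j, ∑ i, ∑ q, ∑ p, F i j p q :=
        Finset.sum_congr rfl fun _ _ => Finset.sum_comm
    _ = ∑ i, ∑ j, ∑ q, ∑ p, F i j p q := Finset.sum_comm

lemma choi_trace_mul {d : ℕ} (E1 E2 : Matrix (Fin d) (Fin d) ℂ →ₗ[ℂ] Matrix (Fin d) (Fin d) ℂ) :
    ((choi E1)ᴴ * choi E2).trace
      = ∑ i : Fin d, ∑ j : Fin d,
          ((E1 (Matrix.single i j 1))ᴴ * E2 (Matrix.single i j 1)).trace := by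
  simp only [Matrix.trace, Matrix.diag, Matrix.mul_apply, Matrix.conjTranspose_apply,
    choi, Matrix.of_apply]
  simp only [Fintype.sum_prod_type]
  exact sum4_perm (fun i j p q =>
    (starRingEnd ℂ) (E1 (Matrix.single i j 1) p q) * E2 (Matrix.single i j 1) p q)

-- sum swap helper
lemma sum_swap5 {α : Type*} [AddCommMonoid α] {β γ : Type*} [Fintype β] [Fintype γ]
    (F : β → γ → γ → γ → γ → α) :
    ∑ μ, ∑ p, ∑ q, ∑ r, ∑ s, F μ p q r s = ∑ p, ∑ q, ∑ r, ∑ s, ∑ μ, F μ p q r s := by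
  rw [Finset.sum_comm]
  refine Finset.sum_congr rfl fun p _ => ?_
  rw [Finset.sum_comm]
  refine Finset.sum_congr rfl fun q _ => ?_
  rw [Finset.sum_comm]
  refine Finset.sum_congr rfl fun r _ => ?_
  rw [Finset.sum_comm]

lemma expand_trace {d : ℕ} (F1 F2 : Matrix (Fin d) (Fin d) ℂ →ₗ[ℂ] Matrix (Fin d) (Fin d) ℂ)
    (A B : Matrix (Fin d) (Fin d) ℂ) :
    ((F1 A)ᴴ * F2 B).trace
      = ∑ p, ∑ q, ∑ r, ∑ s, (starRingEnd ℂ) (A r s)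
          * (B p q * ((F1 (Matrix.single r s 1))ᴴ * F2 (Matrix.single p q 1)).trace) := by
  conv_lhs => rw [matrix_eq_sum_single A, matrix_eq_sum_single B]
  simp only [map_sum, Matrix.conjTranspose_sum, Matrix.sum_mul, Matrix.mul_sum, Matrix.trace_sum]
  refine Finset.sum_congr rfl fun p _ => ?_
  refine Finset.sum_congr rfl fun q _ => ?_
  refine Finset.sum_congr rfl fun r _ => ?_
  refine Finset.sum_congr rfl fun s _ => ?_
  rw [show Matrix.single r s (A r s) = A r s • Matrix.single r s 1 by
      rw [Matrix.smul_single, smul_eq_mul, mul_one],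
    show Matrix.single p q (B p q) = B p q • Matrix.single p q 1 by
      rw [Matrix.smul_single, smul_eq_mul, mul_one]]
  rw [_root_.map_smul, _root_.map_smul, Matrix.conjTranspose_smul, Matrix.smul_mul, Matrix.mul_smul,
    Matrix.trace_smul, Matrix.trace_smul]
  simp only [starRingEnd_apply, smul_eq_mul]

lemma master {d : ℕ} (hd : 0 < d)
    (F1 F2 : Matrix (Fin d) (Fin d) ℂ →ₗ[ℂ] Matrix (Fin d) (Fin d) ℂ)
    (hF1tp : ∀ ρ, (F1 ρ).trace = ρ.trace) (hF2tp : ∀ ρ, (F2 ρ).trace = ρ.trace)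
    (X : Fin (d ^ 2 - 1) → Matrix (Fin d) (Fin d) ℂ)
    (hXtr : ∀ i, (X i).trace = 0)
    (hXherm : ∀ i, (X i)ᴴ = X i)
    (hXortho : ∀ i j, ((X i)ᴴ * X j).trace = if i = j then 1 else 0) :
    ∑ i, ∑ j, (starRingEnd ℂ) (((X i)ᴴ * F1 (X j)).trace) * ((X i)ᴴ * F2 (X j)).trace
      = ((choi F1)ᴴ * choi F2).trace - ((d : ℂ))⁻¹ * ((F1 1)ᴴ * F2 1).trace := by
  classical
  have hd0 : (d : ℝ) ≠ 0 := Nat.cast_ne_zero.mpr hd.ne'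
  set c : ℂ := (((Real.sqrt d)⁻¹ : ℝ) : ℂ) with hc
  have hcconj : (starRingEnd ℂ) c = c := Complex.conj_ofReal _
  have hcc : c * c = ((d : ℂ))⁻¹ := by
    rw [hc, ← Complex.ofReal_mul, ← mul_inv, Real.mul_self_sqrt (Nat.cast_nonneg d)]
    push_cast
    rfl
  set Y : Option (Fin (d ^ 2 - 1)) → Matrix (Fin d) (Fin d) ℂ :=
    fun μ => μ.elim (c • 1) X with hY
  -- orthonormality
  have horth : Orthonormal ℂ (fun μ => toE (Y μ)) := by
    rw [orthonormal_iff_ite]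
    intro μ ν
    match μ, ν with
    | Option.none, Option.none =>
        simp only [hY, Option.elim, inner_toE, Matrix.conjTranspose_smul, Matrix.smul_mul,
          Matrix.mul_smul, Matrix.conjTranspose_one, Matrix.one_mul, Matrix.trace_smul,
          smul_eq_mul, if_true]
        rw [show (star c : ℂ) = c from hcconj, Matrix.trace_one, ← mul_assoc, hcc]
        simp only [Fintype.card_fin]
        exact inv_mul_cancel₀ (by exact_mod_cast hd.ne')
    | Option.none, Option.some j =>
        simp only [hY, Option.elim, inner_toE, Matrix.conjTranspose_smul, Matrix.smul_mul,
          Matrix.conjTranspose_one, Matrix.one_mul, Matrix.trace_smul, smul_eq_mul]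
        rw [hXtr j]
        simp
    | Option.some i, Option.none =>
        simp only [hY, Option.elim, inner_toE, Matrix.mul_smul, Matrix.mul_one,
          Matrix.trace_smul, smul_eq_mul]
        rw [Matrix.trace_conjTranspose, hXtr i]
        simp
    | Option.some i, Option.some j =>
        simp only [hY, Option.elim, inner_toE]
        rw [hXortho i j]
        simp [Option.some.injEq]
  -- it is a basis
  have hcard : Fintype.card (Option (Fin (d ^ 2 - 1)))
      = Module.finrank ℂ (EuclideanSpace ℂ (Fin d × Fin d)) := by
    rw [finrank_euclideanSpace]
    simp only [Fintype.card_option, Fintype.card_fin, Fintype.card_prod]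
    have : 1 ≤ d ^ 2 := Nat.one_le_iff_ne_zero.mpr (pow_ne_zero 2 hd.ne')
    rw [Nat.sub_add_cancel this, sq]
  let b0 := basisOfLinearIndependentOfCardEqFinrank horth.linearIndependent hcard
  have hb0 : ⇑b0 = fun μ => toE (Y μ) :=
    coe_basisOfLinearIndependentOfCardEqFinrank _ _
  let bY : OrthonormalBasis (Option (Fin (d ^ 2 - 1))) ℂ (EuclideanSpace ℂ (Fin d × Fin d)) :=
    b0.toOrthonormalBasis (by rwa [hb0])
  have hbY : ∀ μ, bY μ = toE (Y μ) := by
    intro μ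
    have : ⇑bY = ⇑b0 := b0.coe_toOrthonormalBasis _
    rw [this, hb0]
  -- Parseval
  have P : ∀ A B : Matrix (Fin d) (Fin d) ℂ,
      (∑ μ, (starRingEnd ℂ) (((Y μ)ᴴ * A).trace) * ((Y μ)ᴴ * B).trace) = (Aᴴ * B).trace := by
    intro A B
    have h := bY.sum_inner_mul_inner (toE A) (toE B)
    simp only [hbY, inner_toE] at h
    rw [← h]
    refine Finset.sum_congr rfl fun μ _ => ?_
    rw [trace_conjTranspose_mul A (Y μ)]
  -- key entry identity
  have key : ∀ p q r s : Fin d,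
      (∑ μ, (Y μ) p q * (starRingEnd ℂ) ((Y μ) r s)) = if p = r ∧ q = s then 1 else 0 := by
    intro p q r s
    have h := P (Matrix.single p q 1) (Matrix.single r s 1)
    simp only [trace_conjTranspose_mul_std, Complex.conj_conj] at h
    rw [h]
    rcases Classical.em (p = r ∧ q = s) with hh | hh
    · obtain ⟨rfl, rfl⟩ := hh
      simp [Matrix.single]
    · rw [if_neg hh]
      have hz : Matrix.single p q (1:ℂ) r s = 0 := by
        simp only [Matrix.single, Matrix.of_apply, if_neg hh]
      rw [hz, map_zero]
  -- basis exchange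
  have hexch : (∑ μ, ((F1 (Y μ))ᴴ * F2 (Y μ)).trace)
      = ∑ p, ∑ q, ((F1 (Matrix.single p q 1))ᴴ * F2 (Matrix.single p q 1)).trace := by
    rw [Finset.sum_congr rfl (fun μ _ => expand_trace F1 F2 (Y μ) (Y μ))]
    rw [sum_swap5 (fun μ p q r s => (starRingEnd ℂ) ((Y μ) r s)
      * ((Y μ) p q * ((F1 (Matrix.single r s 1))ᴴ * F2 (Matrix.single p q 1)).trace))]
    refine Finset.sum_congr rfl fun p _ => Finset.sum_congr rfl fun q _ => ?_
    have inner1 : ∀ r s : Fin d, (∑ μ, (starRingEnd ℂ) ((Y μ) r s) * ((Y μ) p q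
        * ((F1 (Matrix.single r s 1))ᴴ * F2 (Matrix.single p q 1)).trace))
        = (if p = r ∧ q = s then 1 else 0)
            * ((F1 (Matrix.single r s 1))ᴴ * F2 (Matrix.single p q 1)).trace := by
      intro r s
      rw [← key p q r s, Finset.sum_mul]
      exact Finset.sum_congr rfl fun μ _ => by ring
    rw [Finset.sum_congr rfl fun r _ => Finset.sum_congr rfl fun s _ => inner1 r s]
    simp only [ite_and, ite_mul, one_mul, zero_mul, Finset.sum_ite_irrel, Finset.sum_const_zero,
      Finset.sum_ite_eq, Finset.mem_univ, if_true]
  -- split the option sum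
  have hnone : ((F1 (Y none))ᴴ * F2 (Y none)).trace
      = ((d : ℂ))⁻¹ * ((F1 1)ᴴ * F2 1).trace := by
    show ((F1 (c • 1))ᴴ * F2 (c • 1)).trace = _
    rw [_root_.map_smul, _root_.map_smul, Matrix.conjTranspose_smul, Matrix.smul_mul,
      Matrix.mul_smul, Matrix.trace_smul, Matrix.trace_smul]
    simp only [smul_eq_mul, show (star c : ℂ) = c from hcconj]
    rw [← mul_assoc, hcc]
  have hsplit : ((d : ℂ))⁻¹ * ((F1 1)ᴴ * F2 1).trace
        + (∑ j, ((F1 (X j))ᴴ * F2 (X j)).trace)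
      = ((choi F1)ᴴ * choi F2).trace := by
    rw [choi_trace_mul]
    rw [← hexch, Fintype.sum_option (fun μ => ((F1 (Y μ))ᴴ * F2 (Y μ)).trace), hnone]
    rfl
  -- the statement sum equals R
  have hcol : ∀ j, (∑ i, (starRingEnd ℂ) (((X i)ᴴ * F1 (X j)).trace) * ((X i)ᴴ * F2 (X j)).trace)
      = ((F1 (X j))ᴴ * F2 (X j)).trace := by
    intro j
    have h := P (F1 (X j)) (F2 (X j))
    rw [Fintype.sum_option (fun μ => (starRingEnd ℂ) (((Y μ)ᴴ * F1 (X j)).trace)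
      * ((Y μ)ᴴ * F2 (X j)).trace)] at h
    have hzero : (starRingEnd ℂ) (((Y none)ᴴ * F1 (X j)).trace) * ((Y none)ᴴ * F2 (X j)).trace = 0 := by
      show (starRingEnd ℂ) (((c • (1:Matrix (Fin d) (Fin d) ℂ))ᴴ * F1 (X j)).trace) * _ = 0
      rw [Matrix.conjTranspose_smul, Matrix.smul_mul, Matrix.trace_smul, Matrix.conjTranspose_one,
        Matrix.one_mul, hF1tp, hXtr j]
      simp
    rw [hzero, zero_add] at h
    exact h
  rw [Finset.sum_comm]
  rw [Finset.sum_congr rfl fun j _ => hcol j]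
  rw [← hsplit]
  ring

/-- For two quantum channels `E₁, E₂` on `M_d(ℂ)` with unital Liouville blocks `T₁, T₂`
(entries `tr[X_i† E_k(X_j)]` in a Hermitian traceless orthonormal basis completing
`X_0 = I/√d`), the Hilbert–Schmidt inner product satisfies
`−d ≤ ⟨T₁, T₂⟩ = tr[T₁†T₂] ≤ d² − 1`. -/
theorem T_inner_product_bounds {d : ℕ} (hd : 0 < d)
    (E1 E2 : Matrix (Fin d) (Fin d) ℂ →ₗ[ℂ] Matrix (Fin d) (Fin d) ℂ)
    (hE1cp : (choi E1).PosSemidef) (hE1tp : ∀ ρ, (E1 ρ).trace = ρ.trace)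
    (hE2cp : (choi E2).PosSemidef) (hE2tp : ∀ ρ, (E2 ρ).trace = ρ.trace)
    (X : Fin (d ^ 2 - 1) → Matrix (Fin d) (Fin d) ℂ)
    (hXtr : ∀ i, (X i).trace = 0)
    (hXherm : ∀ i, (X i)ᴴ = X i)
    (hXortho : ∀ i j, ((X i)ᴴ * X j).trace = if i = j then 1 else 0) :
    (-(d : ℂ) ≤ ∑ i, ∑ j,
        (starRingEnd ℂ) (((X i)ᴴ * E1 (X j)).trace) * ((X i)ᴴ * E2 (X j)).trace)
    ∧
    (∑ i, ∑ j, (starRingEnd ℂ) (((X i)ᴴ * E1 (X j)).trace) * ((X i)ᴴ * E2 (X j)).trace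
        ≤ (d : ℂ) ^ 2 - 1) := by
  have hdpos : (0:ℝ) < (d:ℝ) := by exact_mod_cast hd
  have hd0 : (d:ℝ) ≠ 0 := hdpos.ne'
  have hdC : ((d:ℂ))⁻¹ = (((d:ℝ)⁻¹ : ℝ) : ℂ) := by push_cast; rfl
  have hM12 := master hd E1 E2 hE1tp hE2tp X hXtr hXherm hXortho
  have hM11 := master hd E1 E1 hE1tp hE1tp X hXtr hXherm hXortho
  have hM22 := master hd E2 E2 hE2tp hE2tp X hXtr hXherm hXortho
  have hA1 := E_one_posSemidef E1 hE1cp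
  have hA2 := E_one_posSemidef E2 hE2cp
  have htA1 : (E1 1).trace = (d:ℂ) := by rw [hE1tp, Matrix.trace_one]; simp
  have htA2 : (E2 1).trace = (d:ℂ) := by rw [hE2tp, Matrix.trace_one]; simp
  -- Q12 is nonneg (hence real)
  have hQ12 : 0 ≤ ((choi E1)ᴴ * choi E2).trace := by
    rw [hE1cp.1]
    exact psd_trace_mul_nonneg hE1cp hE2cp
  have hQ12re : 0 ≤ (((choi E1)ᴴ * choi E2).trace).re := by
    have := (Complex.le_def.mp hQ12).1; simpa using this
  have hQ12im : (((choi E1)ᴴ * choi E2).trace).im = 0 := by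
    have := (Complex.le_def.mp hQ12).2; simpa using this.symm
  -- P12 is real
  have hP12conj : (starRingEnd ℂ) (((E1 1)ᴴ * E2 1).trace) = ((E1 1)ᴴ * E2 1).trace := by
    rw [← trace_conjTranspose_mul (E2 1) (E1 1)]
    rw [hA1.1, hA2.1, Matrix.trace_mul_comm]
  have hP12im : (((E1 1)ᴴ * E2 1).trace).im = 0 := by
    have := congrArg Complex.im hP12conj
    rw [Complex.conj_im] at this
    linarith
  -- norms
  have hnormsq1 : ‖toE (E1 1)‖^2 = (((E1 1)ᴴ * E1 1).trace).re := by
    have h := inner_self_eq_norm_sq (𝕜 := ℂ) (toE (E1 1))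
    rw [inner_toE] at h
    simpa using h.symm
  have hnormsq2 : ‖toE (E2 1)‖^2 = (((E2 1)ᴴ * E2 1).trace).re := by
    have h := inner_self_eq_norm_sq (𝕜 := ℂ) (toE (E2 1))
    rw [inner_toE] at h
    simpa using h.symm
  have hnorm1 : ‖toE (E1 1)‖ ≤ (d:ℝ) := by
    have h := (psd_trace_sq_le hA1).1
    rw [htA1] at h
    simp only [Complex.natCast_re] at h
    have h2 : ‖toE (E1 1)‖^2 ≤ (d:ℝ)^2 := by
      rw [hnormsq1, hA1.1]; exact h
    nlinarith [norm_nonneg (toE (E1 1))]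
  have hnorm2 : ‖toE (E2 1)‖ ≤ (d:ℝ) := by
    have h := (psd_trace_sq_le hA2).1
    rw [htA2] at h
    simp only [Complex.natCast_re] at h
    have h2 : ‖toE (E2 1)‖^2 ≤ (d:ℝ)^2 := by
      rw [hnormsq2, hA2.1]; exact h
    nlinarith [norm_nonneg (toE (E2 1))]
  -- P12 bounded above by d^2
  have hP12le : (((E1 1)ᴴ * E2 1).trace).re ≤ (d:ℝ)^2 := by
    have h := norm_inner_le_norm (𝕜 := ℂ) (toE (E1 1)) (toE (E2 1))
    rw [inner_toE] at h
    have hre : (((E1 1)ᴴ * E2 1).trace).re ≤ ‖((E1 1)ᴴ * E2 1).trace‖ := by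
      exact Complex.re_le_norm _
    nlinarith [norm_nonneg (toE (E1 1)), norm_nonneg (toE (E2 1))]
  -- P11, P22 bounded below by d
  have hnormone : ‖toE (1 : Matrix (Fin d) (Fin d) ℂ)‖^2 = (d:ℝ) := by
    have h := inner_self_eq_norm_sq (𝕜 := ℂ) (toE (1 : Matrix (Fin d) (Fin d) ℂ))
    rw [inner_toE, Matrix.conjTranspose_one, Matrix.one_mul, Matrix.trace_one] at h
    simpa using h.symm
  have hP11ge : (d:ℝ) ≤ (((E1 1)ᴴ * E1 1).trace).re := by
    have h := norm_inner_le_norm (𝕜 := ℂ) (toE (1 : Matrix (Fin d) (Fin d) ℂ)) (toE (E1 1))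
    rw [inner_toE, Matrix.conjTranspose_one, Matrix.one_mul, htA1] at h
    have hnd : ‖((d:ℕ) : ℂ)‖ = (d:ℝ) := by
      simp
    rw [hnd] at h
    rw [← hnormsq1]
    nlinarith [norm_nonneg (toE (E1 1)), norm_nonneg (toE (1 : Matrix (Fin d) (Fin d) ℂ))]
  have hP22ge : (d:ℝ) ≤ (((E2 1)ᴴ * E2 1).trace).re := by
    have h := norm_inner_le_norm (𝕜 := ℂ) (toE (1 : Matrix (Fin d) (Fin d) ℂ)) (toE (E2 1))
    rw [inner_toE, Matrix.conjTranspose_one, Matrix.one_mul, htA2] at h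
    have hnd : ‖((d:ℕ) : ℂ)‖ = (d:ℝ) := by
      simp
    rw [hnd] at h
    rw [← hnormsq2]
    nlinarith [norm_nonneg (toE (E2 1)), norm_nonneg (toE (1 : Matrix (Fin d) (Fin d) ℂ))]
  -- Q11, Q22 bounded above by d^2
  have hQ11le : ((((choi E1)ᴴ) * choi E1).trace).re ≤ (d:ℝ)^2 := by
    rw [hE1cp.1]
    have h := (psd_trace_sq_le hE1cp).1
    rw [choi_trace E1 hE1tp] at h
    simpa using h
  have hQ22le : ((((choi E2)ᴴ) * choi E2).trace).re ≤ (d:ℝ)^2 := by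
    rw [hE2cp.1]
    have h := (psd_trace_sq_le hE2cp).1
    rw [choi_trace E2 hE2tp] at h
    simpa using h
  -- convert self-overlaps to real sums
  have hNid : ∀ (F : Matrix (Fin d) (Fin d) ℂ →ₗ[ℂ] Matrix (Fin d) (Fin d) ℂ),
      (∑ i, ∑ j, (starRingEnd ℂ) (((X i)ᴴ * F (X j)).trace) * ((X i)ᴴ * F (X j)).trace)
        = ((∑ i, ∑ j, Complex.normSq (((X i)ᴴ * F (X j)).trace) : ℝ) : ℂ) := by
    intro F
    push_cast
    refine Finset.sum_congr rfl fun i _ => Finset.sum_congr rfl fun j _ => ?_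
    rw [mul_comm, Complex.mul_conj]
  rw [hNid E1] at hM11
  rw [hNid E2] at hM22
  have hsplitC : ∀ (Q P : ℂ), (Q - ((d:ℂ))⁻¹ * P).re = Q.re - (d:ℝ)⁻¹ * P.re
      ∧ (Q - ((d:ℂ))⁻¹ * P).im = Q.im - (d:ℝ)⁻¹ * P.im := by
    intro Q P
    rw [hdC]
    constructor
    · simp [Complex.sub_re, Complex.mul_re]
    · simp [Complex.sub_im, Complex.mul_im]
  have hinv_nonneg : (0:ℝ) ≤ (d:ℝ)⁻¹ := inv_nonneg.mpr hdpos.le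
  have hinvd : (d:ℝ)⁻¹ * (d:ℝ) = 1 := inv_mul_cancel₀ hd0
  have hN1 : (∑ i, ∑ j, Complex.normSq (((X i)ᴴ * E1 (X j)).trace) : ℝ)
      = ((((choi E1)ᴴ * choi E1).trace).re) - (d:ℝ)⁻¹ * ((((E1 1)ᴴ * E1 1).trace).re) := by
    have h := congrArg Complex.re hM11
    rw [Complex.ofReal_re, (hsplitC _ _).1] at h
    exact h
  have hN2 : (∑ i, ∑ j, Complex.normSq (((X i)ᴴ * E2 (X j)).trace) : ℝ)
      = ((((choi E2)ᴴ * choi E2).trace).re) - (d:ℝ)⁻¹ * ((((E2 1)ᴴ * E2 1).trace).re) := by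
    have h := congrArg Complex.re hM22
    rw [Complex.ofReal_re, (hsplitC _ _).1] at h
    exact h
  have hN1le : (∑ i, ∑ j, Complex.normSq (((X i)ᴴ * E1 (X j)).trace) : ℝ) ≤ (d:ℝ)^2 - 1 := by
    rw [hN1]
    have h1 : (d:ℝ)⁻¹ * (d:ℝ) ≤ (d:ℝ)⁻¹ * ((((E1 1)ᴴ * E1 1).trace).re) :=
      mul_le_mul_of_nonneg_left hP11ge hinv_nonneg
    linarith
  have hN2le : (∑ i, ∑ j, Complex.normSq (((X i)ᴴ * E2 (X j)).trace) : ℝ) ≤ (d:ℝ)^2 - 1 := by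
    rw [hN2]
    have h1 : (d:ℝ)⁻¹ * (d:ℝ) ≤ (d:ℝ)⁻¹ * ((((E2 1)ᴴ * E2 1).trace).re) :=
      mul_le_mul_of_nonneg_left hP22ge hinv_nonneg
    linarith
  -- real and imaginary parts of the target sum
  have hSre : (∑ i, ∑ j, (starRingEnd ℂ) (((X i)ᴴ * E1 (X j)).trace) * ((X i)ᴴ * E2 (X j)).trace).re
      = (((choi E1)ᴴ * choi E2).trace).re - (d:ℝ)⁻¹ * ((((E1 1)ᴴ * E2 1).trace).re) := by
    have h := congrArg Complex.re hM12
    rw [(hsplitC _ _).1] at h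
    exact h
  have hSim : (∑ i, ∑ j, (starRingEnd ℂ) (((X i)ᴴ * E1 (X j)).trace) * ((X i)ᴴ * E2 (X j)).trace).im
      = 0 := by
    have h := congrArg Complex.im hM12
    rw [(hsplitC _ _).2, hQ12im, hP12im] at h
    simpa using h
  -- parallelogram-type bound
  have hpoint : ∀ a b : ℂ, Complex.normSq (a - b)
      = Complex.normSq a + Complex.normSq b - 2*((starRingEnd ℂ) a * b).re := by
    intro a b
    simp only [Complex.normSq_apply, Complex.mul_re, Complex.sub_re, Complex.sub_im,
      Complex.conj_re, Complex.conj_im]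
    ring
  have hdiff : (0:ℝ) ≤ ∑ i, ∑ j,
      Complex.normSq ((((X i)ᴴ * E1 (X j)).trace) - (((X i)ᴴ * E2 (X j)).trace)) :=
    Finset.sum_nonneg fun i _ => Finset.sum_nonneg fun j _ => Complex.normSq_nonneg _
  have hreS : (∑ i, ∑ j, (starRingEnd ℂ) (((X i)ᴴ * E1 (X j)).trace) * ((X i)ᴴ * E2 (X j)).trace).re
      = ∑ i, ∑ j, ((starRingEnd ℂ) (((X i)ᴴ * E1 (X j)).trace) * ((X i)ᴴ * E2 (X j)).trace).re := by
    rw [Complex.re_sum]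
    exact Finset.sum_congr rfl fun i _ => Complex.re_sum _ _
  have hexpand : (∑ i, ∑ j,
        Complex.normSq ((((X i)ᴴ * E1 (X j)).trace) - (((X i)ᴴ * E2 (X j)).trace)))
      = (∑ i, ∑ j, Complex.normSq (((X i)ᴴ * E1 (X j)).trace))
        + (∑ i, ∑ j, Complex.normSq (((X i)ᴴ * E2 (X j)).trace))
        - 2 * ∑ i, ∑ j,
            ((starRingEnd ℂ) (((X i)ᴴ * E1 (X j)).trace) * ((X i)ᴴ * E2 (X j)).trace).re := by
    rw [Finset.sum_congr rfl fun i (_ : i ∈ Finset.univ) =>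
      Finset.sum_congr rfl fun j (_ : j ∈ Finset.univ) => hpoint _ _]
    rw [Finset.mul_sum, ← Finset.sum_add_distrib, ← Finset.sum_sub_distrib]
    refine Finset.sum_congr rfl fun i _ => ?_
    rw [Finset.mul_sum, ← Finset.sum_add_distrib, ← Finset.sum_sub_distrib]
  constructor
  · rw [Complex.le_def]
    constructor
    · rw [hSre]
      have h1 : (d:ℝ)⁻¹ * ((((E1 1)ᴴ * E2 1).trace).re) ≤ (d:ℝ)⁻¹ * (d:ℝ)^2 :=
        mul_le_mul_of_nonneg_left hP12le hinv_nonneg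
      have h2 : (d:ℝ)⁻¹ * (d:ℝ)^2 = (d:ℝ) := by
        rw [sq, ← mul_assoc, hinvd, one_mul]
      simp only [Complex.neg_re, Complex.natCast_re]
      linarith
    · simp only [Complex.neg_im, Complex.natCast_im, neg_zero]
      exact hSim.symm
  · rw [Complex.le_def]
    constructor
    · have hub : (∑ i, ∑ j, (starRingEnd ℂ) (((X i)ᴴ * E1 (X j)).trace)
          * ((X i)ᴴ * E2 (X j)).trace).re ≤ (d:ℝ)^2 - 1 := by
        rw [hreS]
        linarith [hdiff, hexpand, hN1le, hN2le]
      have hcast : ((d:ℂ)^2 - 1) = (((d:ℝ)^2 - 1 : ℝ) : ℂ) := by push_cast; ring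
      rw [hcast, Complex.ofReal_re]
      exact hub
    · have hcast : ((d:ℂ)^2 - 1) = (((d:ℝ)^2 - 1 : ℝ) : ℂ) := by push_cast; ring
      rw [hcast, Complex.ofReal_im]
      exact hSim
end

section
/- Let E₁, E₂ be quantum channels on M_d(ℂ) with unital blocks T₁, T₂, and suppose E₁ is unital (E₁(I) = I). Then ⟨T₁, T₂⟩ = tr[T₁†T₂] ≥ −1. -/
open Matrix ComplexOrder

namespace TIPaux

variable {d : ℕ}

noncomputable def inn (A B : Matrix (Fin d) (Fin d) ℂ) : ℂ := (Aᴴ * B).trace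

lemma inn_eq (A B : Matrix (Fin d) (Fin d) ℂ) :
    inn A B = ∑ p : Fin d × Fin d, (starRingEnd ℂ) (A p.1 p.2) * B p.1 p.2 := by
  simp only [inn, Matrix.trace, Matrix.diag, Matrix.mul_apply, Matrix.conjTranspose_apply,
    Fintype.sum_prod_type]
  exact Finset.sum_comm

lemma inn_conj (A B : Matrix (Fin d) (Fin d) ℂ) :
    (starRingEnd ℂ) (inn A B) = inn B A := by
  simp only [inn_eq, map_sum, _root_.map_mul, Complex.conj_conj]
  exact Finset.sum_congr rfl fun p _ => mul_comm _ _

noncomputable def vecm : Matrix (Fin d) (Fin d) ℂ →ₗ[ℂ] EuclideanSpace ℂ (Fin d × Fin d) where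
  toFun M := (WithLp.equiv 2 _).symm fun p => M p.1 p.2
  map_add' M N := by ext p; simp
  map_smul' c M := by ext p; simp

lemma inner_vecm (A B : Matrix (Fin d) (Fin d) ℂ) :
    (inner ℂ (vecm A) (vecm B) : ℂ) = inn A B := by
  rw [inn_eq]
  simp [vecm, PiLp.inner_apply, RCLike.inner_apply, mul_comm]

lemma entry_eq (E : Matrix (Fin d) (Fin d) ℂ →ₗ[ℂ] Matrix (Fin d) (Fin d) ℂ)
    (M : Matrix (Fin d) (Fin d) ℂ) (p q : Fin d) :
    E M p q = ∑ m : Fin d × Fin d, M m.1 m.2 * choi E (p, m.1) (q, m.2) := by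
  conv_lhs => rw [matrix_eq_sum_single M]
  have h : ∀ (i j : Fin d), Matrix.single i j (M i j)
      = M i j • Matrix.single i j (1 : ℂ) := by
    intro i j; rw [Matrix.smul_single, smul_eq_mul, mul_one]
  simp only [h, map_sum, _root_.map_smul, Matrix.sum_apply, Matrix.smul_apply, smul_eq_mul,
    Fintype.sum_prod_type]
  simp [choi, smul_eq_mul]

lemma inn_stdBasis_left (k l : Fin d) (B : Matrix (Fin d) (Fin d) ℂ) :
    inn (Matrix.single k l 1) B = B k l := by
  simp only [inn_eq, Matrix.single, Fintype.sum_prod_type, Matrix.of_apply, apply_ite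
    (starRingEnd ℂ), _root_.map_one, _root_.map_zero, ite_mul, one_mul, zero_mul]
  rw [Finset.sum_eq_single k, Finset.sum_eq_single l] <;> simp +contextual [eq_comm]


lemma parseval (hd : 0 < d) (Y : Option (Fin (d ^ 2 - 1)) → Matrix (Fin d) (Fin d) ℂ)
    (hY : ∀ a b, inn (Y a) (Y b) = if a = b then 1 else 0) (A B : Matrix (Fin d) (Fin d) ℂ) :
    ∑ a, inn A (Y a) * inn (Y a) B = inn A B := by
  have hv : Orthonormal ℂ (fun a => vecm (Y a)) := by
    rw [orthonormal_iff_ite]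
    intro a b
    rw [inner_vecm]
    exact hY a b
  have hcard : Fintype.card (Option (Fin (d ^ 2 - 1)))
      = Module.finrank ℂ (EuclideanSpace ℂ (Fin d × Fin d)) := by
    rw [finrank_euclideanSpace]
    simp only [Fintype.card_option, Fintype.card_fin, Fintype.card_prod]
    have h1 : 0 < d * d := Nat.mul_pos hd hd
    rw [pow_two]
    omega
  let bas := basisOfLinearIndependentOfCardEqFinrank hv.linearIndependent hcard
  have hbas : ⇑bas = fun a => vecm (Y a) :=
    coe_basisOfLinearIndependentOfCardEqFinrank hv.linearIndependent hcard
  have hv' : Orthonormal ℂ ⇑bas := by rwa [hbas]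
  have hob : ∀ a, (bas.toOrthonormalBasis hv') a = vecm (Y a) := by
    intro a
    rw [show ((bas.toOrthonormalBasis hv') a) = ⇑(bas.toOrthonormalBasis hv') a from rfl,
      Module.Basis.coe_toOrthonormalBasis, hbas]
  have := (bas.toOrthonormalBasis hv').sum_inner_mul_inner (vecm A) (vecm B)
  simp only [hob, inner_vecm] at this
  exact this


lemma delta (hd : 0 < d) (Y : Option (Fin (d ^ 2 - 1)) → Matrix (Fin d) (Fin d) ℂ)
    (hY : ∀ a b, inn (Y a) (Y b) = if a = b then 1 else 0) (m m' : Fin d × Fin d) :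
    ∑ b, (starRingEnd ℂ) (Y b m.1 m.2) * Y b m'.1 m'.2 = if m = m' then 1 else 0 := by
  have h := parseval hd Y hY (Matrix.single m.1 m.2 1) (Matrix.single m'.1 m'.2 1)
  have h2 : ∀ b, inn (Y b) (Matrix.single m'.1 m'.2 1)
      = (starRingEnd ℂ) (Y b m'.1 m'.2) := by
    intro b
    rw [← inn_stdBasis_left m'.1 m'.2 (Y b)]
    exact (inn_conj _ _).symm
  simp only [inn_stdBasis_left, h2] at h
  have h3 := congrArg (starRingEnd ℂ) h
  simp only [map_sum, _root_.map_mul, Complex.conj_conj] at h3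
  rw [h3]
  by_cases hmm : m = m'
  · subst hmm; simp [Matrix.single]
  · have : ¬(m'.1 = m.1 ∧ m'.2 = m.2) := by
      intro ⟨h1', h2'⟩
      exact hmm (Prod.ext h1'.symm h2'.symm)
    simp [Matrix.single, this, hmm]

lemma psd_diag_nonneg {n : Type*} [Fintype n] [DecidableEq n] {M : Matrix n n ℂ}
    (hM : M.PosSemidef) (i : n) : (0 : ℂ) ≤ M i i := by
  have := hM.2 (Finsupp.single i 1)
  simpa [dotProduct, Matrix.mulVec, Pi.single_apply, Finset.sum_ite_eq] using this

lemma trace_mul_psd_nonneg {n : Type*} [Fintype n] [DecidableEq n] {A B : Matrix n n ℂ}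
    (hA : A.PosSemidef) (hB : B.PosSemidef) : (0 : ℂ) ≤ (A * B).trace := by
  obtain ⟨C, rfl⟩ : ∃ C : Matrix n n ℂ, A = star C * C := by
    open scoped MatrixOrder in exact CStarAlgebra.nonneg_iff_eq_star_mul_self.mp hA.nonneg
  rw [Matrix.mul_assoc, Matrix.trace_mul_comm]
  have hpsd := hB.mul_mul_conjTranspose_same C
  rw [Matrix.trace]
  exact Finset.sum_nonneg fun i _ => psd_diag_nonneg hpsd i


lemma trace_reindex {n : Type*} [Fintype n] (A B : Matrix (n × n) (n × n) ℂ) :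
    ∑ p : n × n, ∑ m : n × n,
        (starRingEnd ℂ) (A (p.1, m.1) (p.2, m.2)) * B (p.1, m.1) (p.2, m.2)
      = (Aᴴ * B).trace := by
  have hL : (Aᴴ * B).trace = ∑ i : n × n, ∑ j : n × n, (starRingEnd ℂ) (A j i) * B j i := by
    simp [Matrix.trace, Matrix.diag, Matrix.mul_apply, Matrix.conjTranspose_apply]
  rw [hL,
    show (∑ p : n × n, ∑ m : n × n,
        (starRingEnd ℂ) (A (p.1, m.1) (p.2, m.2)) * B (p.1, m.1) (p.2, m.2))
      = ∑ z : (n × n) × (n × n),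
        (starRingEnd ℂ) (A (z.1.1, z.2.1) (z.1.2, z.2.2)) * B (z.1.1, z.2.1) (z.1.2, z.2.2) from
      (Fintype.sum_prod_type (fun z : (n × n) × (n × n) =>
        (starRingEnd ℂ) (A (z.1.1, z.2.1) (z.1.2, z.2.2))
          * B (z.1.1, z.2.1) (z.1.2, z.2.2))).symm,
    show (∑ i : n × n, ∑ j : n × n, (starRingEnd ℂ) (A j i) * B j i)
      = ∑ z : (n × n) × (n × n), (starRingEnd ℂ) (A z.2 z.1) * B z.2 z.1 from
      (Fintype.sum_prod_type (fun z : (n × n) × (n × n) =>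
        (starRingEnd ℂ) (A z.2 z.1) * B z.2 z.1)).symm]
  exact Fintype.sum_equiv
    ⟨fun z => ((z.1.2, z.2.2), (z.1.1, z.2.1)), fun w => ((w.2.1, w.1.1), (w.2.2, w.1.2)),
      fun ⟨⟨a, b⟩, ⟨c, e⟩⟩ => rfl, fun ⟨⟨a, b⟩, ⟨c, e⟩⟩ => rfl⟩
    _ _ (fun ⟨⟨a, b⟩, ⟨c, e⟩⟩ => rfl)

lemma sum_inn_eq_trace (hd : 0 < d) (Y : Option (Fin (d ^ 2 - 1)) → Matrix (Fin d) (Fin d) ℂ)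
    (hY : ∀ a b, inn (Y a) (Y b) = if a = b then 1 else 0)
    (E1 E2 : Matrix (Fin d) (Fin d) ℂ →ₗ[ℂ] Matrix (Fin d) (Fin d) ℂ) :
    ∑ b, inn (E1 (Y b)) (E2 (Y b)) = ((choi E1)ᴴ * choi E2).trace := by
  calc ∑ b, inn (E1 (Y b)) (E2 (Y b))
      = ∑ b, ∑ p : Fin d × Fin d, ∑ m : Fin d × Fin d, ∑ m' : Fin d × Fin d,
          ((starRingEnd ℂ) (Y b m.1 m.2) * Y b m'.1 m'.2) *
          ((starRingEnd ℂ) (choi E1 (p.1, m.1) (p.2, m.2)) * choi E2 (p.1, m'.1) (p.2, m'.2)) := by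
        refine Finset.sum_congr rfl fun b _ => ?_
        rw [inn_eq]
        refine Finset.sum_congr rfl fun p _ => ?_
        rw [entry_eq E1 (Y b) p.1 p.2, entry_eq E2 (Y b) p.1 p.2, map_sum, Finset.sum_mul_sum]
        refine Finset.sum_congr rfl fun m _ => Finset.sum_congr rfl fun m' _ => ?_
        rw [_root_.map_mul]
        ring
    _ = ∑ p : Fin d × Fin d, ∑ m : Fin d × Fin d, ∑ m' : Fin d × Fin d,
          ((starRingEnd ℂ) (choi E1 (p.1, m.1) (p.2, m.2)) * choi E2 (p.1, m'.1) (p.2, m'.2)) *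
          ∑ b, (starRingEnd ℂ) (Y b m.1 m.2) * Y b m'.1 m'.2 := by
        rw [Finset.sum_comm]
        refine Finset.sum_congr rfl fun p _ => ?_
        rw [Finset.sum_comm]
        refine Finset.sum_congr rfl fun m _ => ?_
        rw [Finset.sum_comm]
        refine Finset.sum_congr rfl fun m' _ => ?_
        rw [Finset.mul_sum]
        exact Finset.sum_congr rfl fun b _ => by ring
    _ = ∑ p : Fin d × Fin d, ∑ m : Fin d × Fin d,
          (starRingEnd ℂ) (choi E1 (p.1, m.1) (p.2, m.2)) * choi E2 (p.1, m.1) (p.2, m.2) := by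
        refine Finset.sum_congr rfl fun p _ => Finset.sum_congr rfl fun m _ => ?_
        have : ∀ m' : Fin d × Fin d,
            ((starRingEnd ℂ) (choi E1 (p.1, m.1) (p.2, m.2)) * choi E2 (p.1, m'.1) (p.2, m'.2)) *
              ∑ b, (starRingEnd ℂ) (Y b m.1 m.2) * Y b m'.1 m'.2
            = if m = m' then
                (starRingEnd ℂ) (choi E1 (p.1, m.1) (p.2, m.2)) * choi E2 (p.1, m'.1) (p.2, m'.2)
              else 0 := by
          intro m'
          rw [delta hd Y hY m m', mul_ite, mul_one, mul_zero]
        rw [Finset.sum_congr rfl fun m' _ => this m']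
        simp
    _ = ((choi E1)ᴴ * choi E2).trace := trace_reindex _ _

end TIPaux

open TIPaux

/-- For two quantum channels `E₁, E₂` on `M_d(ℂ)` with unital Liouville blocks `T₁, T₂`,
if `E₁` is unital then `⟨T₁, T₂⟩ = tr[T₁†T₂] ≥ −1`. -/
theorem T_inner_product_lower_bound_unital {d : ℕ} (hd : 0 < d)
    (E1 E2 : Matrix (Fin d) (Fin d) ℂ →ₗ[ℂ] Matrix (Fin d) (Fin d) ℂ)
    (hE1cp : (choi E1).PosSemidef) (hE1tp : ∀ ρ, (E1 ρ).trace = ρ.trace)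
    (hE1unital : E1 (1 : Matrix (Fin d) (Fin d) ℂ) = 1)
    (hE2cp : (choi E2).PosSemidef) (hE2tp : ∀ ρ, (E2 ρ).trace = ρ.trace)
    (X : Fin (d ^ 2 - 1) → Matrix (Fin d) (Fin d) ℂ)
    (hXtr : ∀ i, (X i).trace = 0)
    (hXherm : ∀ i, (X i)ᴴ = X i)
    (hXortho : ∀ i j, ((X i)ᴴ * X j).trace = if i = j then 1 else 0) :
    (-1 : ℂ) ≤ ∑ i, ∑ j,
        (starRingEnd ℂ) (((X i)ᴴ * E1 (X j)).trace) * ((X i)ᴴ * E2 (X j)).trace := by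
  classical
  set c : ℂ := ((Real.sqrt d : ℝ) : ℂ)⁻¹ with hc
  set Y : Option (Fin (d ^ 2 - 1)) → Matrix (Fin d) (Fin d) ℂ :=
    fun a => Option.elim a (c • 1) X with hYdef
  have hYn : Y none = c • 1 := rfl
  have hYs : ∀ i, Y (some i) = X i := fun _ => rfl
  have hd0 : (0 : ℝ) ≤ (d : ℝ) := Nat.cast_nonneg d
  have hdc : ((d : ℕ) : ℂ) ≠ 0 := Nat.cast_ne_zero.mpr hd.ne'
  have hcc : (starRingEnd ℂ) c * c = ((d : ℂ))⁻¹ := by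
    rw [hc, map_inv₀, Complex.conj_ofReal, ← mul_inv]
    norm_cast
    rw [Real.mul_self_sqrt hd0]
    simp [Complex.ofReal_inv]
  have hinnl : ∀ (z : ℂ) (M : Matrix (Fin d) (Fin d) ℂ),
      inn (z • 1) M = (starRingEnd ℂ) z * M.trace := by
    intro z M
    simp [TIPaux.inn, Matrix.conjTranspose_smul, Matrix.smul_mul, Matrix.trace_smul,
      smul_eq_mul]
  have hinnr : ∀ (z : ℂ) (M : Matrix (Fin d) (Fin d) ℂ),
      inn M (z • 1) = z * (Mᴴ).trace := by
    intro z M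
    simp [TIPaux.inn, Matrix.mul_smul, Matrix.trace_smul, Matrix.mul_one, smul_eq_mul]
  have hY : ∀ a b, inn (Y a) (Y b) = if a = b then 1 else 0 := by
    rintro (_ | i) (_ | j)
    · rw [hYn, hinnl, Matrix.trace_smul, Matrix.trace_one, smul_eq_mul, ← mul_assoc, hcc,
        if_pos rfl]
      simp [Fintype.card_fin, inv_mul_cancel₀ hdc]
    · rw [hYn, hYs, hinnl, hXtr, mul_zero, if_neg (by simp)]
    · rw [hYn, hYs, hinnr, Matrix.trace_conjTranspose, hXtr, star_zero, mul_zero,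
        if_neg (by simp)]
    · rw [hYs, hYs, show inn (X i) (X j) = ((X i)ᴴ * X j).trace from rfl, hXortho i j]
      simp
  have key2 : ∀ b, ∑ a, (starRingEnd ℂ) (inn (Y a) (E1 (Y b))) * inn (Y a) (E2 (Y b))
      = inn (E1 (Y b)) (E2 (Y b)) := by
    intro b
    rw [← parseval hd Y hY]
    exact Finset.sum_congr rfl fun a _ => by rw [inn_conj]
  have hY1 : E1 (Y none) = Y none := by
    rw [hYn, LinearMap.map_smul, hE1unital]
  have colnone : ∑ a, (starRingEnd ℂ) (inn (Y a) (E1 (Y none))) * inn (Y a) (E2 (Y none))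
      = 1 := by
    rw [key2 none, hY1, hYn, LinearMap.map_smul, hinnl, Matrix.trace_smul, hE2tp,
      Matrix.trace_one, smul_eq_mul, ← mul_assoc, hcc]
    simp [Fintype.card_fin, inv_mul_cancel₀ hdc]
  have zeroterm : ∀ j, inn (Y none) (E1 (X j)) = 0 := by
    intro j
    rw [hYn, hinnl, hE1tp, hXtr, mul_zero]
  set T : ℂ := ∑ i, ∑ j,
      (starRingEnd ℂ) (inn (X i) (E1 (X j))) * inn (X i) (E2 (X j)) with hT
  have key1 : ∑ b : Option (Fin (d ^ 2 - 1)), ∑ a : Option (Fin (d ^ 2 - 1)),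
      (starRingEnd ℂ) (inn (Y a) (E1 (Y b))) * inn (Y a) (E2 (Y b)) = 1 + T := by
    have hrow : ∀ j, ∑ a : Option (Fin (d ^ 2 - 1)),
          (starRingEnd ℂ) (inn (Y a) (E1 (Y (some j)))) * inn (Y a) (E2 (Y (some j)))
          = ∑ i, (starRingEnd ℂ) (inn (X i) (E1 (X j))) * inn (X i) (E2 (X j)) := by
        intro j
        rw [Fintype.sum_option, hYs j, zeroterm j, map_zero, zero_mul, zero_add]
        exact Finset.sum_congr rfl fun i _ => by rw [hYs]
    rw [Fintype.sum_option, colnone, Finset.sum_congr rfl fun j _ => hrow j, hT]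
    congr 1
    exact Finset.sum_comm
  have pos : (0 : ℂ) ≤ ∑ b, inn (E1 (Y b)) (E2 (Y b)) := by
    rw [sum_inn_eq_trace hd Y hY E1 E2, hE1cp.1.eq]
    exact trace_mul_psd_nonneg hE1cp hE2cp
  have h0 : (0 : ℂ) ≤ 1 + T := by
    rw [← key1]
    rw [show (∑ b : Option (Fin (d ^ 2 - 1)), ∑ a : Option (Fin (d ^ 2 - 1)),
        (starRingEnd ℂ) (inn (Y a) (E1 (Y b))) * inn (Y a) (E2 (Y b)))
        = ∑ b, inn (E1 (Y b)) (E2 (Y b)) from Finset.sum_congr rfl fun b _ => key2 b]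
    exact pos
  have hfin : (-1 : ℂ) ≤ T := by
    have h := add_le_add_right h0 (-1)
    rw [add_zero] at h
    calc (-1 : ℂ) ≤ -1 + (1 + T) := h
      _ = T := by ring
  exact hfin
end

section
/- Write the Choi state of a qubit channel E as J(E) = (1/4)(I⊗I + Σ_i x_i σ_i ⊗ I + Σ_{i,j} T_{ij} σ_i ⊗ σ_j). If J is a valid state (positive semidefinite with trace 1) then the 'unitalized' matrix (1/4)(I⊗I + Σ_{i,j} T_{ij} σ_i ⊗ σ_j) obtained by setting x = 0 is also a valid state; equivalently, for every qubit channel there exists a unital qubit channel with the same T-matrix. -/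
open Matrix Kronecker ComplexOrder

/-- The Pauli matrices. -/
noncomputable def pauli : Fin 3 → Matrix (Fin 2) (Fin 2) ℂ
  | 0 => !![0, 1; 1, 0]
  | 1 => !![0, -Complex.I; Complex.I, 0]
  | 2 => !![1, 0; 0, -1]

/-- The candidate Choi matrix `(1/4)(I⊗I + Σ_i x_i σ_i ⊗ I + Σ_{ij} T_{ij} σ_i ⊗ σ_j)`
of a qubit channel with non-unitality vector `x` and `T`-matrix `T`. -/
noncomputable def choiForm (x : Fin 3 → ℝ) (T : Matrix (Fin 3) (Fin 3) ℝ) :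
    Matrix (Fin 2 × Fin 2) (Fin 2 × Fin 2) ℂ :=
  ((4 : ℂ))⁻¹ • ((1 : Matrix (Fin 2 × Fin 2) (Fin 2 × Fin 2) ℂ)
    + ∑ i, (x i : ℂ) • (pauli i ⊗ₖ (1 : Matrix (Fin 2) (Fin 2) ℂ))
    + ∑ i, ∑ j, (T i j : ℂ) • (pauli i ⊗ₖ pauli j))

lemma pauli1_conj (i : Fin 3) : pauli 1 * (pauli i)ᵀ * pauli 1 = -pauli i := by
  fin_cases i <;>
    · ext a b
      fin_cases a <;> fin_cases b <;>
        simp [pauli, Matrix.mul_apply, Fin.sum_univ_succ, Matrix.transpose_apply,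
          Matrix.vecHead, Matrix.vecTail, Complex.ext_iff, Matrix.vecMul, dotProduct]

lemma pauli1_sq : pauli 1 * pauli 1 = 1 := by
  ext a b
  fin_cases a <;> fin_cases b <;>
    simp [pauli, Matrix.mul_apply, Fin.sum_univ_succ, Matrix.one_apply, Complex.ext_iff]

lemma pauli1_herm : (pauli 1)ᴴ = pauli 1 := by
  ext a b
  fin_cases a <;> fin_cases b <;> simp [pauli, Matrix.conjTranspose_apply, Complex.ext_iff]

lemma pauli_trace (i : Fin 3) : (pauli i).trace = 0 := by
  fin_cases i <;> simp [pauli, Matrix.trace_fin_two]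

/-- The conjugating unitary `σ_y ⊗ σ_y`. -/
noncomputable abbrev Uyy : Matrix (Fin 2 × Fin 2) (Fin 2 × Fin 2) ℂ := pauli 1 ⊗ₖ pauli 1

lemma Uyy_herm : Uyyᴴ = Uyy := by
  ext ⟨a,b⟩ ⟨c,d⟩
  have h : ∀ p q : Fin 2, star (pauli 1 q p) = pauli 1 p q := fun p q =>
    congrFun (congrFun pauli1_herm p) q
  simp only [Matrix.conjTranspose_apply, Matrix.kroneckerMap_apply, star_mul', h]

lemma conj_one : Uyy * (1 : Matrix (Fin 2 × Fin 2) (Fin 2 × Fin 2) ℂ)ᵀ * Uyy = 1 := by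
  rw [Matrix.transpose_one, Matrix.mul_one, ← Matrix.mul_kronecker_mul, pauli1_sq,
    Matrix.one_kronecker_one]

lemma conj_pk1 (i : Fin 3) :
    Uyy * (pauli i ⊗ₖ (1 : Matrix (Fin 2) (Fin 2) ℂ))ᵀ * Uyy = -(pauli i ⊗ₖ 1) := by
  rw [← Matrix.kroneckerMap_transpose, ← Matrix.mul_kronecker_mul, ← Matrix.mul_kronecker_mul,
    Matrix.transpose_one, pauli1_conj, Matrix.mul_one, pauli1_sq]
  ext ⟨a,b⟩ ⟨c,d⟩
  simp only [Matrix.kroneckerMap_apply, Matrix.neg_apply]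
  ring

lemma conj_pkp (i j : Fin 3) :
    Uyy * (pauli i ⊗ₖ pauli j)ᵀ * Uyy = pauli i ⊗ₖ pauli j := by
  rw [← Matrix.kroneckerMap_transpose, ← Matrix.mul_kronecker_mul, ← Matrix.mul_kronecker_mul,
    pauli1_conj, pauli1_conj]
  ext ⟨a,b⟩ ⟨c,d⟩
  simp only [Matrix.kroneckerMap_apply, Matrix.neg_apply]
  ring

lemma conj_choi (x : Fin 3 → ℝ) (T : Matrix (Fin 3) (Fin 3) ℝ) :
    Uyy * (choiForm x T)ᵀ * Uyy = choiForm (-x) T := by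
  unfold choiForm
  simp only [Matrix.transpose_smul, Matrix.transpose_add, Matrix.transpose_sum,
    Matrix.mul_smul, Matrix.smul_mul, Matrix.mul_add, Matrix.add_mul,
    Matrix.mul_sum, Matrix.sum_mul, conj_one, conj_pk1, conj_pkp,
    Pi.neg_apply, Complex.ofReal_neg, neg_smul, smul_neg]

lemma trace_choi (x : Fin 3 → ℝ) (T : Matrix (Fin 3) (Fin 3) ℝ) :
    (choiForm x T).trace = 1 := by
  unfold choiForm
  simp only [Matrix.trace_smul, Matrix.trace_add, Matrix.trace_sum, Matrix.trace_kronecker,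
    pauli_trace, zero_mul, Finset.sum_const_zero, smul_zero, add_zero, Matrix.trace_one,
    Matrix.trace_smul]
  simp [Finset.card_univ]

lemma avg_choi (x : Fin 3 → ℝ) (T : Matrix (Fin 3) (Fin 3) ℝ) :
    choiForm 0 T = (2:ℂ)⁻¹ • (choiForm x T + choiForm (-x) T) := by
  unfold choiForm
  simp only [Pi.neg_apply, Complex.ofReal_neg, neg_smul, Pi.zero_apply, Complex.ofReal_zero,
    zero_smul, Finset.sum_const_zero, Finset.sum_neg_distrib]
  module

/-- If the Choi matrix of a qubit channel, written in the Pauli expansion with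
non-unitality vector `x` and `T`-matrix `T`, is a valid state (positive semidefinite
with trace 1), then the `unitalized` matrix obtained by setting `x = 0` is also a valid
state; i.e., every qubit channel admits a unital qubit channel with the same `T`-matrix. -/
theorem unitalized_choi_is_state (x : Fin 3 → ℝ) (T : Matrix (Fin 3) (Fin 3) ℝ)
    (hpos : (choiForm x T).PosSemidef) (htr : (choiForm x T).trace = 1) :
    (choiForm 0 T).PosSemidef ∧ (choiForm 0 T).trace = 1 := by
  refine ⟨?_, trace_choi 0 T⟩
  have hneg : (choiForm (-x) T).PosSemidef := by
    rw [← conj_choi x T]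
    nth_rewrite 2 [← Uyy_herm]
    exact hpos.transpose.mul_mul_conjTranspose_same Uyy
  have hsum := hpos.add hneg
  rw [avg_choi x T]
  refine Matrix.posSemidef_iff_dotProduct_mulVec.mpr ⟨?_, ?_⟩
  · have h := hsum.1
    unfold Matrix.IsHermitian at *
    rw [Matrix.conjTranspose_smul, h]
    congr 1
    simp [Complex.ext_iff]
  · intro v
    have h := hsum.dotProduct_mulVec_nonneg v
    have : star v ⬝ᵥ ((2:ℂ)⁻¹ • (choiForm x T + choiForm (-x) T)) *ᵥ v
        = (2:ℂ)⁻¹ * (star v ⬝ᵥ (choiForm x T + choiForm (-x) T) *ᵥ v) := by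
      rw [Matrix.smul_mulVec, dotProduct_smul, smul_eq_mul]
    rw [this]
    have h2 : (0:ℂ) ≤ (2:ℂ)⁻¹ := by
      rw [show ((2:ℂ)⁻¹ = ((2⁻¹ : ℝ) : ℂ)) by push_cast; ring]
      exact Complex.zero_le_real.mpr (by norm_num)
    exact mul_nonneg h2 h
end

section
/- Let t_{ij}, s_{ij} (1 ≤ i,j ≤ r) be real symmetric arrays and p a probability vector satisfying: t_{ii}, s_{ii} ∈ [0,1]; |t_{ij}| ≤ 1 and t_{ij} ≥ −β_A for all i,j; |s_{ij}| ≤ 1 and s_{ij} ≥ −β_B; and set A = Σ_{ij} p_i p_j t_{ij} ∈ [0,1], B = Σ_{ij} p_i p_j s_{ij} ∈ [0,1] with A ≤ B. Then Σ_{ij} p_i p_j t_{ij} s_{ij} − A·B ≤ β_A(1+β_B)(1 − Σ_i p_i²) + 1/4. -/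
/-- Abstract combinatorial core of the bound on correlated unitarity over separable
channels: for symmetric arrays `t, s` of normalized inner products and a probability
vector `p`, with `A = Σ p_i p_j t_{ij}` and `B = Σ p_i p_j s_{ij}` in `[0,1]`, `A ≤ B`,
one has `Σ p_i p_j t_{ij} s_{ij} − A·B ≤ β_A(1+β_B)(1 − Σ p_i²) + 1/4`. -/
theorem correlated_unitarity_core_bound {r : ℕ} (βA βB : ℝ)
    (hβA0 : 0 < βA) (hβA1 : βA ≤ 1) (hβB0 : 0 < βB) (hβB1 : βB ≤ 1)
    (t s : Fin r → Fin r → ℝ) (p : Fin r → ℝ)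
    (hp0 : ∀ i, 0 ≤ p i) (hp1 : ∑ i, p i = 1)
    (htsymm : ∀ i j, t i j = t j i) (hssymm : ∀ i j, s i j = s j i)
    (htd0 : ∀ i, 0 ≤ t i i) (htd1 : ∀ i, t i i ≤ 1)
    (hsd0 : ∀ i, 0 ≤ s i i) (hsd1 : ∀ i, s i i ≤ 1)
    (htabs : ∀ i j, |t i j| ≤ 1) (htlb : ∀ i j, -βA ≤ t i j)
    (hsabs : ∀ i j, |s i j| ≤ 1) (hslb : ∀ i j, -βB ≤ s i j)
    (hsub : ∀ i j, s i j ≤ Real.sqrt (s i i * s j j))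
    (hA0 : 0 ≤ ∑ i, ∑ j, p i * p j * t i j)
    (hA1 : ∑ i, ∑ j, p i * p j * t i j ≤ 1)
    (hB0 : 0 ≤ ∑ i, ∑ j, p i * p j * s i j)
    (hB1 : ∑ i, ∑ j, p i * p j * s i j ≤ 1)
    (hAB : ∑ i, ∑ j, p i * p j * t i j ≤ ∑ i, ∑ j, p i * p j * s i j) :
    (∑ i, ∑ j, p i * p j * t i j * s i j)
        - (∑ i, ∑ j, p i * p j * t i j) * (∑ i, ∑ j, p i * p j * s i j)
      ≤ βA * (1 + βB) * (1 - ∑ i, p i ^ 2) + 1 / 4 := by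
  set A := ∑ i, ∑ j, p i * p j * t i j with hA
  set B := ∑ i, ∑ j, p i * p j * s i j with hB
  set c := βA * (1 + βB) with hc
  -- termwise bound
  have key : ∀ i j, p i * p j * t i j * s i j ≤
      p i * p j * t i j + c * (p i * p j - if i = j then p i * p j else 0) := by
    intro i j
    have ht1 : t i j ≤ 1 := (abs_le.mp (htabs i j)).2
    have hs1 : s i j ≤ 1 := (abs_le.mp (hsabs i j)).2
    have htl := htlb i j
    have hsl := hslb i j
    have hpij : 0 ≤ p i * p j := mul_nonneg (hp0 i) (hp0 j)
    by_cases h : i = j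
    · subst h
      simp only [if_true, eq_self_iff_true, sub_self, mul_zero, add_zero]
      nlinarith [mul_nonneg (mul_nonneg hpij (htd0 i)) (by linarith : (0:ℝ) ≤ 1 - s i i)]
    · simp only [if_neg h, sub_zero]
      -- t*(s-1) ≤ c
      have h1 : t i j * (s i j - 1) ≤ c := by
        nlinarith [mul_nonneg (by linarith : (0:ℝ) ≤ βA + t i j) (by linarith : (0:ℝ) ≤ 1 - s i j)]
      nlinarith [mul_le_mul_of_nonneg_left h1 hpij]
  -- sum the termwise bound
  have hsum : (∑ i, ∑ j, p i * p j * t i j * s i j) ≤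
      ∑ i, ∑ j, (p i * p j * t i j + c * (p i * p j - if i = j then p i * p j else 0)) := by
    refine Finset.sum_le_sum fun i _ => Finset.sum_le_sum fun j _ => key i j
  -- compute the correction sum
  have hcorr : (∑ i, ∑ j, (p i * p j - if i = j then p i * p j else 0))
      = 1 - ∑ i, p i ^ 2 := by
    have : ∀ i : Fin r, (∑ j, (p i * p j - if i = j then p i * p j else 0))
        = p i - p i ^ 2 := by
      intro i
      rw [Finset.sum_sub_distrib]
      have h1 : (∑ j, p i * p j) = p i := by
        rw [← Finset.mul_sum, hp1, mul_one]
      have h2 : (∑ j : Fin r, if i = j then p i * p j else 0) = p i ^ 2 := by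
        rw [Finset.sum_ite_eq (Finset.univ) i (fun j => p i * p j)]
        simp [sq]
      rw [h1, h2]
    rw [Finset.sum_congr rfl fun i _ => this i, Finset.sum_sub_distrib, hp1]
  have hsplit : (∑ i, ∑ j, (p i * p j * t i j + c * (p i * p j - if i = j then p i * p j else 0)))
      = A + c * (1 - ∑ i, p i ^ 2) := by
    rw [hA, ← hcorr, Finset.mul_sum, ← Finset.sum_add_distrib]
    refine Finset.sum_congr rfl fun i _ => ?_
    rw [Finset.mul_sum, ← Finset.sum_add_distrib]
  have hsum2 : (∑ i, ∑ j, p i * p j * t i j * s i j) ≤ A + c * (1 - ∑ i, p i ^ 2) := by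
    calc _ ≤ _ := hsum
    _ = _ := hsplit
  -- A(1-B) ≤ 1/4
  have hAB14 : A * (1 - B) ≤ 1 / 4 := by
    nlinarith [mul_nonneg hA0 (sub_nonneg.mpr hAB), sq_nonneg (2 * A - 1)]
  nlinarith [hsum2, hAB14]
end
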